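/- arXiv:2302.03889 — 4 statements merged into one kernel-verified Lean document; each statement's English description precedes it below -/
import Mathlib

section
/- Let W : ℝ → ℝ be differentiable with W'(σ) ≥ 0 for all σ, let η : ℝ → ℝ be twice continuously differentiable and convex, fix w₀ ∈ ℝ, and define Q(w) = ∫_{w₀}^{w} η'(σ) W'(σ) dσ. Define H(a,b) = ( η'(a) W(a) − Q(a) ) − ( η'(a) W(b) − Q(b) ). Then for all a, b ∈ ℝ: (i) H(a,b) = ∫_a^b ( η'(σ) − η'(a) ) W'(σ) dσ = ∫_a^b ( ∫_a^σ η''(μ) dμ ) W'(σ) dσ; (ii) H(a,b) ≥ 0; and (iii) if moreover η''(μ) W'(σ) ≥ 2c > 0 for all μ, σ ∈ ℝ, then H(a,b) ≥ c (b − a)². -/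
set_option maxHeartbeats 800000


open MeasureTheory intervalIntegral

/-- properties of the entropy dissipation integrand
`H(a,b) = (η'(a)W(a) − Q(a)) − (η'(a)W(b) − Q(b))` for an entropy/entropy-flux
pair `(η, Q)` with `Q' = η' W'` and a non-decreasing flux `W`:
(i) two integral representations of `H`; (ii) `H ≥ 0`; (iii) a quadratic lower
bound under uniform positivity of `η'' W'`. -/
theorem stmt_10
    (W : ℝ → ℝ) (hW : ContDiff ℝ 1 W) (hW' : ∀ σ : ℝ, 0 ≤ deriv W σ)
    (η : ℝ → ℝ) (hη : ContDiff ℝ 2 η) (hηconv : ConvexOn ℝ Set.univ η)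
    (w₀ : ℝ) (Q : ℝ → ℝ)
    (hQ : ∀ x : ℝ, Q x = ∫ σ in w₀..x, deriv η σ * deriv W σ)
    (H : ℝ → ℝ → ℝ)
    (hH : ∀ a b : ℝ, H a b = (deriv η a * W a - Q a) - (deriv η a * W b - Q b)) :
    ∀ a b : ℝ,
      (H a b = ∫ σ in a..b, (deriv η σ - deriv η a) * deriv W σ) ∧
      (H a b = ∫ σ in a..b, (∫ μ in a..σ, deriv (deriv η) μ) * deriv W σ) ∧
      0 ≤ H a b ∧
      (∀ c : ℝ, 0 < c → (∀ μ σ : ℝ, 2 * c ≤ deriv (deriv η) μ * deriv W σ) →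
        c * (b - a) ^ 2 ≤ H a b) := by
  intro a b
  have hWd : Differentiable ℝ W := hW.differentiable one_ne_zero
  have hW'c : Continuous (deriv W) := hW.continuous_deriv le_rfl
  have hη1 : ContDiff ℝ 1 (deriv η) := by
    have := (contDiff_succ_iff_deriv (n := 1)).mp (by exact_mod_cast hη)
    exact this.2.2
  have hηd : Differentiable ℝ η := hη.differentiable two_ne_zero
  have hη'c : Continuous (deriv η) := hη1.continuous
  have hη''c : Continuous (deriv (deriv η)) := hη1.continuous_deriv le_rfl
  have hη'mono : Monotone (deriv η) := fun x y h =>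
    hηconv.monotoneOn_deriv (fun z _ => hηd z) trivial trivial h
  -- FTC facts
  have hFTCW : ∀ x y : ℝ, (∫ σ in x..y, deriv W σ) = W y - W x := fun x y =>
    integral_deriv_eq_sub (fun z _ => hWd z) (hW'c.intervalIntegrable x y)
  have hFTCη : ∀ x y : ℝ, (∫ μ in x..y, deriv (deriv η) μ) = deriv η y - deriv η x := fun x y =>
    integral_deriv_eq_sub (fun z _ => (hη1.differentiable one_ne_zero) z) (hη''c.intervalIntegrable x y)
  have hfc : Continuous (fun σ => deriv η σ * deriv W σ) := hη'c.mul hW'c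
  have hQsub : Q b - Q a = ∫ σ in a..b, deriv η σ * deriv W σ := by
    rw [hQ a, hQ b]
    exact integral_interval_sub_left (hfc.intervalIntegrable w₀ b) (hfc.intervalIntegrable w₀ a)
  -- representation (i)
  have rep1 : H a b = ∫ σ in a..b, (deriv η σ - deriv η a) * deriv W σ := by
    have : ∀ σ, (deriv η σ - deriv η a) * deriv W σ
        = deriv η σ * deriv W σ - deriv η a * deriv W σ := fun σ => by ring
    simp only [this]
    rw [intervalIntegral.integral_sub (hfc.intervalIntegrable a b)
      ((hW'c.intervalIntegrable a b).const_mul _),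
      intervalIntegral.integral_const_mul, hFTCW, ← hQsub, hH a b]
    ring
  refine ⟨rep1, ?_, ?_, ?_⟩
  · rw [rep1]
    congr 1
    ext σ
    rw [hFTCη a σ]
  · -- nonnegativity
    have hf : ∀ σ, a ≤ σ → 0 ≤ (deriv η σ - deriv η a) * deriv W σ := fun σ hσ =>
      mul_nonneg (sub_nonneg.mpr (hη'mono hσ)) (hW' σ)
    have hf' : ∀ σ, σ ≤ a → (deriv η σ - deriv η a) * deriv W σ ≤ 0 := fun σ hσ =>
      mul_nonpos_of_nonpos_of_nonneg (sub_nonpos.mpr (hη'mono hσ)) (hW' σ)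
    rw [rep1]
    rcases le_total a b with hab | hab
    · exact intervalIntegral.integral_nonneg hab (fun σ hσ => hf σ hσ.1)
    · rw [integral_symm b a]
      have h0 : 0 ≤ ∫ σ in b..a, -((deriv η σ - deriv η a) * deriv W σ) :=
        intervalIntegral.integral_nonneg hab (fun σ hσ => neg_nonneg.mpr (hf' σ hσ.2))
      rw [intervalIntegral.integral_neg] at h0
      linarith
  · -- quadratic lower bound
    intro c hc hcb
    have hgc : Continuous (fun σ : ℝ => 2 * c * (σ - a)) := by continuity
    have hfC : Continuous (fun σ => (deriv η σ - deriv η a) * deriv W σ) :=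
      (hη'c.sub continuous_const).mul hW'c
    -- pointwise bounds
    have key₁ : ∀ σ, a ≤ σ → 2 * c * (σ - a) ≤ (deriv η σ - deriv η a) * deriv W σ := by
      intro σ hσ
      have h1 : (deriv η σ - deriv η a) * deriv W σ
          = ∫ μ in a..σ, deriv (deriv η) μ * deriv W σ := by
        rw [intervalIntegral.integral_mul_const, hFTCη]
      have h2 : (2 * c) * (σ - a) = ∫ μ in a..σ, (2 * c : ℝ) := by
        rw [intervalIntegral.integral_const, smul_eq_mul]; ring
      rw [h1, h2]
      have hi1 : IntervalIntegrable (fun _ : ℝ => (2 * c : ℝ)) volume a σ :=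
        intervalIntegrable_const
      have hi2 : IntervalIntegrable (fun μ => deriv (deriv η) μ * deriv W σ) volume a σ :=
        (hη''c.mul continuous_const).intervalIntegrable a σ
      exact intervalIntegral.integral_mono_on hσ hi1 hi2 (fun μ _ => hcb μ σ)
    have key₂ : ∀ σ, σ ≤ a → (deriv η σ - deriv η a) * deriv W σ ≤ 2 * c * (σ - a) := by
      intro σ hσ
      have h1 : (deriv η σ - deriv η a) * deriv W σ
          = -∫ μ in σ..a, deriv (deriv η) μ * deriv W σ := by
        rw [intervalIntegral.integral_mul_const, hFTCη]
        ring
      have h2 : (2 * c) * (σ - a) = -∫ μ in σ..a, (2 * c : ℝ) := by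
        rw [intervalIntegral.integral_const, smul_eq_mul]; ring
      rw [h1, h2, neg_le_neg_iff]
      have hi1 : IntervalIntegrable (fun _ : ℝ => (2 * c : ℝ)) volume σ a :=
        intervalIntegrable_const
      have hi2 : IntervalIntegrable (fun μ => deriv (deriv η) μ * deriv W σ) volume σ a :=
        (hη''c.mul continuous_const).intervalIntegrable σ a
      exact intervalIntegral.integral_mono_on hσ hi1 hi2 (fun μ _ => hcb μ σ)
    -- value of the comparison integral
    have hgval : (∫ σ in a..b, 2 * c * (σ - a)) = c * (b - a) ^ 2 := by
      have : (∫ σ in a..b, 2 * c * (σ - a))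
          = 2 * c * ∫ σ in a..b, (σ - a) := by
        rw [intervalIntegral.integral_const_mul]
      rw [this]
      have : (∫ σ in a..b, (σ - a)) = (b - a) ^ 2 / 2 := by
        have := intervalIntegral.integral_comp_sub_right (a := a) (b := b) (fun x => x) a
        rw [this, integral_id]
        ring
      rw [this]; ring
    rw [rep1, ← hgval]
    rcases le_total a b with hab | hab
    · have hi1 : IntervalIntegrable (fun σ : ℝ => 2 * c * (σ - a)) volume a b :=
        hgc.intervalIntegrable a b
      have hi2 : IntervalIntegrable (fun σ => (deriv η σ - deriv η a) * deriv W σ) volume a b :=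
        hfC.intervalIntegrable a b
      exact intervalIntegral.integral_mono_on hab hi1 hi2 (fun σ hσ => key₁ σ hσ.1)
    · rw [integral_symm b a, integral_symm b a (f := fun σ => (deriv η σ - deriv η a) * deriv W σ), neg_le_neg_iff]
      have hi1 : IntervalIntegrable (fun σ : ℝ => 2 * c * (σ - a)) volume b a :=
        hgc.intervalIntegrable b a
      have hi2 : IntervalIntegrable (fun σ => (deriv η σ - deriv η a) * deriv W σ) volume b a :=
        hfC.intervalIntegrable b a
      exact intervalIntegral.integral_mono_on hab hi2 hi1 (fun σ hσ => key₂ σ hσ.2)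
end

section
/- Let w : ℝ × (0,T) → ℝ be a bounded C¹ function with bounded spatial derivative that satisfies, at every point (z,t), the filtered nonlocal conservation law ∂_t w(z,t) = ∂_z (W∘w(·,t))̄(z). Then for every entropy/entropy-flux pair (η, Q) and every (z,t), ∂_t [η(w(z,t))] + D(z,t) = ∂_z (Q∘w(·,t))̄(z), where D(z,t) = ∫_0^∞ (−Φ_α')(ζ) · ( ∫_{w(z,t)}^{w(z+ζ,t)} ∫_{w(z,t)}^{σ} η''(μ) W'(σ) dμ dσ ) dζ, and D(z,t) ≥ 0. In particular, every such solution dissipates every convex entropy. -/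
open MeasureTheory
open Set Filter

/-- The anisotropic averaging operator
`h̄(z) = ∫₀^∞ Φ_α(ζ) h(z+ζ) dζ`, with `Φ_α(ζ) = (1/α)Φ(ζ/α)`. -/
noncomputable def nlAvg (Φ : ℝ → ℝ) (α : ℝ) (h : ℝ → ℝ) (z : ℝ) : ℝ :=
  ∫ ζ in Set.Ioi (0:ℝ), (1/α) * Φ (ζ/α) * h (z + ζ)

/-- The entropy dissipation term
`D(z,t) = ∫₀^∞ (−Φ_α')(ζ) ∫_{w(z,t)}^{w(z+ζ,t)} ∫_{w(z,t)}^{σ} η''(μ) W'(σ) dμ dσ dζ`. -/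
noncomputable def Dterm (Φ : ℝ → ℝ) (α : ℝ) (W η : ℝ → ℝ) (w : ℝ → ℝ → ℝ)
    (z t : ℝ) : ℝ :=
  ∫ ζ in Set.Ioi (0:ℝ),
    (-(deriv (fun s => (1/α) * Φ (s/α)) ζ)) *
      ∫ σ in (w z t)..(w (z+ζ) t),
        (∫ μ in (w z t)..σ, deriv (deriv η) μ) * deriv W σ

/-- A nonnegative, antitone-on-`[0,∞)`, integrable function tends to `0` at `+∞`. -/
lemma aux_tendsto_zero (φ : ℝ → ℝ) (h0 : ∀ x : ℝ, 0 ≤ x → 0 ≤ φ x)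
    (hanti : AntitoneOn φ (Set.Ici 0)) (hint : IntegrableOn φ (Set.Ioi 0)) :
    Tendsto φ atTop (nhds 0) := by
  set ψ : ℝ → ℝ := fun x => φ (max x 0) with hψ
  have hψanti : Antitone ψ := by
    intro x y hxy
    exact hanti (le_max_right x 0) (le_max_right y 0) (max_le_max hxy le_rfl)
  have hbdd : BddBelow (Set.range ψ) := ⟨0, by rintro - ⟨x, rfl⟩; exact h0 _ (le_max_right _ _)⟩
  have htend : Tendsto ψ atTop (nhds (⨅ x, ψ x)) := tendsto_atTop_ciInf hψanti hbdd
  set c := ⨅ x, ψ x with hc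
  have hc0 : 0 ≤ c := le_ciInf fun x => h0 _ (le_max_right _ _)
  have hcle : ∀ x : ℝ, 0 ≤ x → c ≤ φ x := by
    intro x hx
    have h := ciInf_le hbdd x
    have h2 : ψ x = φ x := by rw [hψ]; simp [max_eq_left hx]
    exact h2 ▸ h
  have hceq : c = 0 := by
    by_contra hne
    have hcpos : 0 < c := lt_of_le_of_ne hc0 (Ne.symm hne)
    have hconst : IntegrableOn (fun _ : ℝ => c) (Set.Ioi 0) := by
      refine hint.mono' aestronglyMeasurable_const ?_
      refine (ae_restrict_iff' measurableSet_Ioi).2 (Filter.Eventually.of_forall fun x hx => ?_)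
      rw [Real.norm_eq_abs, abs_of_nonneg hc0]
      exact hcle x (le_of_lt hx)
    rw [integrableOn_const_iff (C := c), Real.volume_Ioi] at hconst
    simp at hconst
    exact hne hconst
  have hφψ : φ =ᶠ[atTop] ψ := by
    filter_upwards [Filter.eventually_ge_atTop (0:ℝ)] with x hx
    rw [hψ]; simp [max_eq_left hx]
  rw [← hceq]
  exact htend.congr' hφψ.symm

lemma aux_deriv_nonpos (φ : ℝ → ℝ) (hdφ : Differentiable ℝ φ)
    (hanti : AntitoneOn φ (Set.Ici 0)) :
    ∀ ζ ∈ Set.Ioi (0:ℝ), deriv φ ζ ≤ 0 := by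
  intro ζ hζ
  have hd : HasDerivAt φ (deriv φ ζ) ζ := (hdφ ζ).hasDerivAt
  rw [hasDerivAt_iff_tendsto_slope] at hd
  have h2 : Tendsto (slope φ ζ) (nhdsWithin ζ (Set.Ioi ζ)) (nhds (deriv φ ζ)) :=
    hd.mono_left (nhdsWithin_mono ζ (fun y hy => ne_of_gt hy))
  refine le_of_tendsto h2 ?_
  filter_upwards [self_mem_nhdsWithin] with y hy
  have hyζ : ζ < y := hy
  have hmono : φ y ≤ φ ζ :=
    hanti (Set.mem_Ici.2 (le_of_lt hζ)) (Set.mem_Ici.2 (le_of_lt (lt_trans hζ hyζ))) (le_of_lt hyζ)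
  rw [slope_def_field]
  exact div_nonpos_of_nonpos_of_nonneg (sub_nonpos.2 hmono) (sub_nonneg.2 (le_of_lt hyζ))

lemma aux_fta (η : ℝ → ℝ) (hη' : Differentiable ℝ (deriv η))
    (hη'' : Continuous (deriv (deriv η))) (a : ℝ) :
    ∀ s : ℝ, ∫ μ in a..s, deriv (deriv η) μ = deriv η s - deriv η a := fun s =>
  intervalIntegral.integral_deriv_eq_sub (fun x _ => hη' x)
    ((hη''.intervalIntegrable _ _))

lemma pt_eq (η W Q : ℝ → ℝ) (hη' : Differentiable ℝ (deriv η))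
    (hη'' : Continuous (deriv (deriv η))) (hη'c : Continuous (deriv η))
    (hWd : Differentiable ℝ W) (hW'c : Continuous (deriv W))
    (hQ : ∀ x, HasDerivAt Q (deriv η x * deriv W x) x) (a b : ℝ) :
    ∫ σ in a..b, (∫ μ in a..σ, deriv (deriv η) μ) * deriv W σ =
      (Q b - Q a) - deriv η a * (W b - W a) := by
  simp only [aux_fta η hη' hη'' a]
  have h1 : IntervalIntegrable (fun σ => deriv η σ * deriv W σ) volume a b :=
    (hη'c.mul hW'c).intervalIntegrable _ _
  have h2 : IntervalIntegrable (fun σ => deriv η a * deriv W σ) volume a b :=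
    (continuous_const.mul hW'c).intervalIntegrable _ _
  simp only [sub_mul]
  rw [intervalIntegral.integral_sub h1 h2,
    intervalIntegral.integral_eq_sub_of_hasDerivAt (fun σ _ => hQ σ) h1,
    intervalIntegral.integral_const_mul,
    intervalIntegral.integral_deriv_eq_sub (fun x _ => hWd x)
      (hW'c.intervalIntegrable _ _)]

lemma pt_nonneg (η W : ℝ → ℝ) (hη' : Differentiable ℝ (deriv η))
    (hη'' : Continuous (deriv (deriv η))) (hmono : Monotone (deriv η))
    (hW'0 : ∀ x, 0 ≤ deriv W x) (a b : ℝ) :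
    0 ≤ ∫ σ in a..b, (∫ μ in a..σ, deriv (deriv η) μ) * deriv W σ := by
  simp only [aux_fta η hη' hη'' a]
  rcases le_total a b with hab | hab
  · refine intervalIntegral.integral_nonneg hab fun u hu => ?_
    exact mul_nonneg (sub_nonneg.2 (hmono hu.1)) (hW'0 u)
  · rw [intervalIntegral.integral_symm]
    have h : 0 ≤ ∫ σ in b..a, -((deriv η σ - deriv η a) * deriv W σ) := by
      refine intervalIntegral.integral_nonneg hab fun u hu => ?_
      have h1 : deriv η u ≤ deriv η a := hmono hu.2
      nlinarith [hW'0 u]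
    rw [intervalIntegral.integral_neg] at h
    linarith

lemma key_hasDeriv (φ : ℝ → ℝ) (hφd : ContDiff ℝ 1 φ)
    (hanti : AntitoneOn φ (Set.Ici 0))
    (hint : IntegrableOn φ (Set.Ioi 0))
    (hlim : Tendsto φ atTop (nhds 0))
    (g : ℝ → ℝ) (hg : ContDiff ℝ 1 g) (C C' : ℝ)
    (hgb : ∀ x, |g x| ≤ C) (hg'b : ∀ x, |deriv g x| ≤ C') (z : ℝ) :
    IntegrableOn (fun ζ => (-(deriv φ ζ)) * (g (z + ζ) - g z)) (Set.Ioi 0) ∧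
    HasDerivAt (fun x => ∫ ζ in Set.Ioi (0:ℝ), φ ζ * g (x + ζ))
      (∫ ζ in Set.Ioi (0:ℝ), (-(deriv φ ζ)) * (g (z + ζ) - g z)) z := by
  have hdφ : Differentiable ℝ φ := hφd.differentiable one_ne_zero
  have hφc : Continuous φ := hφd.continuous
  have hφ'c : Continuous (deriv φ) := (contDiff_one_iff_deriv.mp hφd).2
  have hgc : Continuous g := hg.continuous
  have hgd : Differentiable ℝ g := hg.differentiable one_ne_zero
  have hg'c : Continuous (deriv g) := (contDiff_one_iff_deriv.mp hg).2
  have hderneg : ∀ ζ ∈ Set.Ioi (0:ℝ), deriv φ ζ ≤ 0 := aux_deriv_nonpos φ hdφ hanti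
  -- the derivative of ζ ↦ g (x + ζ) and x ↦ g (x + ζ)
  have hgder : ∀ x ζ : ℝ, HasDerivAt (fun y => g (y + ζ)) (deriv g (x + ζ)) x := by
    intro x ζ
    have h1 : HasDerivAt (fun y : ℝ => y + ζ) 1 x := (hasDerivAt_id x).add_const ζ
    simpa [Function.comp_def] using ((hgd (x + ζ)).hasDerivAt).comp x h1
  have hgder2 : ∀ ζ : ℝ, HasDerivAt (fun y => g (z + y)) (deriv g (z + ζ)) ζ := by
    intro ζ
    have h1 : HasDerivAt (fun y : ℝ => z + y) 1 ζ := (hasDerivAt_id ζ).const_add z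
    simpa [Function.comp_def] using ((hgd (z + ζ)).hasDerivAt).comp ζ h1
  -- integrability of -φ' and its total mass
  have hnegd : ∀ x ∈ Set.Ici (0:ℝ), HasDerivAt (fun y => -φ y) (-(deriv φ x)) x :=
    fun x _ => ((hdφ x).hasDerivAt).neg
  have hlimneg : Tendsto (fun y => -φ y) atTop (nhds 0) := by
    simpa using hlim.neg
  have hIder : IntegrableOn (fun ζ => -(deriv φ ζ)) (Set.Ioi 0) :=
    integrableOn_Ioi_deriv_of_nonneg' hnegd
      (fun x hx => neg_nonneg.2 (hderneg x hx)) hlimneg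
  have hIval : ∫ ζ in Set.Ioi (0:ℝ), -(deriv φ ζ) = φ 0 := by
    have := integral_Ioi_of_hasDerivAt_of_nonneg
      (hφc.neg.continuousWithinAt) (fun x hx => hnegd x (Set.mem_Ici.2 (le_of_lt hx)))
      (fun x hx => neg_nonneg.2 (hderneg x hx)) hlimneg
    simpa using this
  -- derivative under the integral sign
  have hmeasF : ∀ x : ℝ, AEStronglyMeasurable (fun ζ => φ ζ * g (x + ζ))
      (volume.restrict (Set.Ioi (0:ℝ))) := fun x =>
    (hφc.mul (hgc.comp (continuous_const.add continuous_id))).aestronglyMeasurable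
  have hmeasF' : ∀ x : ℝ, AEStronglyMeasurable (fun ζ => φ ζ * deriv g (x + ζ))
      (volume.restrict (Set.Ioi (0:ℝ))) := fun x =>
    (hφc.mul (hg'c.comp (continuous_const.add continuous_id))).aestronglyMeasurable
  have hFint : Integrable (fun ζ => φ ζ * g (z + ζ)) (volume.restrict (Set.Ioi (0:ℝ))) := by
    refine Integrable.mono' (hint.abs.mul_const C) (hmeasF z)
      (Filter.Eventually.of_forall fun ζ => ?_)
    rw [Real.norm_eq_abs, abs_mul]
    exact mul_le_mul_of_nonneg_left (hgb _) (abs_nonneg _)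
  have hA := (hasDerivAt_integral_of_dominated_loc_of_deriv_le
      (F := fun x ζ => φ ζ * g (x + ζ)) (F' := fun x ζ => φ ζ * deriv g (x + ζ))
      (bound := fun ζ => |φ ζ| * C') (μ := volume.restrict (Set.Ioi (0:ℝ)))
      (x₀ := z) (Filter.univ_mem (f := nhds z))
      (Filter.Eventually.of_forall fun x => hmeasF x) hFint (hmeasF' z)
      (Filter.Eventually.of_forall fun ζ x _ => by
        rw [Real.norm_eq_abs, abs_mul]
        exact mul_le_mul_of_nonneg_left (hg'b _) (abs_nonneg _))
      (hint.abs.mul_const C')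
      (Filter.Eventually.of_forall fun ζ x _ => (hgder x ζ).const_mul (φ ζ))).2
  -- integration by parts on (0, ∞)
  have hfd : ∀ ζ : ℝ, HasDerivAt (fun y => φ y * g (z + y))
      (deriv φ ζ * g (z + ζ) + φ ζ * deriv g (z + ζ)) ζ :=
    fun ζ => ((hdφ ζ).hasDerivAt).mul (hgder2 ζ)
  have h1int : IntegrableOn (fun ζ => deriv φ ζ * g (z + ζ)) (Set.Ioi 0) := by
    refine Integrable.mono' (hIder.mul_const C)
      ((hφ'c.mul (hgc.comp (continuous_const.add continuous_id))).aestronglyMeasurable)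
      ((ae_restrict_iff' measurableSet_Ioi).2 (Filter.Eventually.of_forall fun ζ hζ => ?_))
    rw [Real.norm_eq_abs, abs_mul, abs_of_nonpos (hderneg ζ hζ)]
    exact mul_le_mul_of_nonneg_left (hgb _) (neg_nonneg.2 (hderneg ζ hζ))
  have h2int : IntegrableOn (fun ζ => φ ζ * deriv g (z + ζ)) (Set.Ioi 0) := by
    refine Integrable.mono' (hint.abs.mul_const C')
      ((hφc.mul (hg'c.comp (continuous_const.add continuous_id))).aestronglyMeasurable)
      (Filter.Eventually.of_forall fun ζ => ?_)
    rw [Real.norm_eq_abs, abs_mul]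
    exact mul_le_mul_of_nonneg_left (hg'b _) (abs_nonneg _)
  have hftend : Tendsto (fun ζ => φ ζ * g (z + ζ)) atTop (nhds 0) := by
    have hb : ∀ ζ : ℝ, ‖φ ζ * g (z + ζ)‖ ≤ |φ ζ| * C := fun ζ => by
      rw [Real.norm_eq_abs, abs_mul]
      exact mul_le_mul_of_nonneg_left (hgb _) (abs_nonneg _)
    have ht : Tendsto (fun ζ : ℝ => |φ ζ| * C) atTop (nhds 0) := by
      simpa using (hlim.abs).mul_const C
    exact squeeze_zero_norm hb ht
  have hftc := integral_Ioi_of_hasDerivAt_of_tendsto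
    (f := fun ζ => φ ζ * g (z + ζ))
    (f' := fun ζ => deriv φ ζ * g (z + ζ) + φ ζ * deriv g (z + ζ))
    ((hφc.mul (hgc.comp (continuous_const.add continuous_id))).continuousWithinAt)
    (fun x _ => hfd x) (h1int.add h2int) hftend
  rw [integral_add h1int h2int] at hftc
  simp only [add_zero] at hftc
  -- rewrite the target integral
  have htarget : ∫ ζ in Set.Ioi (0:ℝ), (-(deriv φ ζ)) * (g (z + ζ) - g z)
      = (∫ ζ in Set.Ioi (0:ℝ), -(deriv φ ζ * g (z + ζ)))
        - ∫ ζ in Set.Ioi (0:ℝ), (-(deriv φ ζ)) * g z := by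
    have h1neg : IntegrableOn (fun ζ => -(deriv φ ζ * g (z + ζ))) (Set.Ioi 0) := by
      exact h1int.neg
    rw [← integral_sub h1neg (hIder.mul_const (g z))]
    exact integral_congr_ae (Filter.Eventually.of_forall fun ζ => by ring)
  have hIntTarget : IntegrableOn (fun ζ => (-(deriv φ ζ)) * (g (z + ζ) - g z))
      (Set.Ioi 0) := by
    have h1neg : IntegrableOn (fun ζ => -(deriv φ ζ * g (z + ζ))) (Set.Ioi 0) := by
      exact h1int.neg
    refine (h1neg.sub (hIder.mul_const (g z))).congr
      (Filter.Eventually.of_forall fun ζ => ?_)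
    simp only [Pi.sub_apply]
    ring
  refine ⟨hIntTarget, ?_⟩
  have hfinal : ∫ ζ in Set.Ioi (0:ℝ), (-(deriv φ ζ)) * (g (z + ζ) - g z)
      = ∫ ζ in Set.Ioi (0:ℝ), φ ζ * deriv g (z + ζ) := by
    rw [htarget, integral_neg, integral_mul_const, hIval]
    linarith
  rw [hfinal]
  exact hA

/-- a bounded `C¹` solution (with bounded spatial derivative) of
the filtered nonlocal conservation law `∂_t w = ∂_z (W∘w)̄` satisfies, for every
entropy/entropy-flux pair `(η,Q)`, the entropy equality
`∂_t η(w) + D = ∂_z (Q∘w)̄` with `D ≥ 0`; in particular it dissipates every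
convex entropy. -/
theorem stmt_11
    (Φ : ℝ → ℝ) (α L T : ℝ) (hα : 0 < α) (hT : 0 < T)
    (hΦdiff : ContDiff ℝ 1 Φ)
    (hΦnonneg : ∀ z : ℝ, 0 ≤ z → 0 ≤ Φ z)
    (hΦmono : ∀ x y : ℝ, 0 ≤ x → x ≤ y → Φ y ≤ Φ x)
    (hΦmass : ∫ ζ in Set.Ioi (0:ℝ), Φ ζ = 1)
    (hΦmom : IntegrableOn (fun ζ => ζ * Φ ζ) (Set.Ioi (0:ℝ)))
    (W : ℝ → ℝ) (hW : ContDiff ℝ 1 W)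
    (hW' : ∀ x : ℝ, 0 ≤ deriv W x ∧ deriv W x ≤ L)
    (w : ℝ → ℝ → ℝ)
    (hwC1 : ContDiff ℝ 1 (fun p : ℝ × ℝ => w p.1 p.2))
    (hwB : ∃ M, ∀ z t, |w z t| ≤ M)
    (hwzB : ∃ K, ∀ z t, |deriv (fun x => w x t) z| ≤ K)
    (hpde : ∀ z t : ℝ, t ∈ Set.Ioo 0 T →
      HasDerivAt (fun s => w z s)
        (deriv (fun x => nlAvg Φ α (fun x' => W (w x' t)) x) z) t) :
    ∀ (η Q : ℝ → ℝ), ContDiff ℝ 2 η → ConvexOn ℝ Set.univ η →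
      (∀ x : ℝ, HasDerivAt Q (deriv η x * deriv W x) x) →
      ∀ z t : ℝ, t ∈ Set.Ioo 0 T →
        (deriv (fun s => η (w z s)) t + Dterm Φ α W η w z t =
          deriv (fun x => nlAvg Φ α (fun x' => Q (w x' t)) x) z) ∧
        0 ≤ Dterm Φ α W η w z t := by
  intro η Q hη hconv hQ z t ht
  obtain ⟨M, hM⟩ := hwB
  obtain ⟨K, hK⟩ := hwzB
  -- smoothness facts
  have hηd : Differentiable ℝ η := hη.differentiable two_ne_zero
  have hη2 : ContDiff ℝ ((1:WithTop ℕ∞)+1) η := by norm_num; exact hη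
  have hη'C1 : ContDiff ℝ 1 (deriv η) := (contDiff_succ_iff_deriv.mp hη2).2.2
  have hη'd : Differentiable ℝ (deriv η) := hη'C1.differentiable one_ne_zero
  have hη'c : Continuous (deriv η) := hη'C1.continuous
  have hη''c : Continuous (deriv (deriv η)) := (contDiff_one_iff_deriv.mp hη'C1).2
  have hWd : Differentiable ℝ W := hW.differentiable one_ne_zero
  have hW'c : Continuous (deriv W) := (contDiff_one_iff_deriv.mp hW).2
  have hL0 : 0 ≤ L := le_trans (hW' 0).1 (hW' 0).2
  have hWabs : ∀ x, |deriv W x| ≤ L := fun x =>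
    abs_le.2 ⟨by linarith [(hW' x).1], (hW' x).2⟩
  have hmono : Monotone (deriv η) :=
    monotoneOn_univ.1 (hconv.monotoneOn_deriv (fun x _ => hηd x))
  have hQd : Differentiable ℝ Q := fun x => (hQ x).differentiableAt
  have hQ1 : ContDiff ℝ 1 Q := by
    refine contDiff_one_iff_deriv.mpr ⟨hQd, ?_⟩
    have hdq : deriv Q = fun x => deriv η x * deriv W x := funext fun x => (hQ x).deriv
    rw [hdq]; exact hη'c.mul hW'c
  -- facts about φ = ζ ↦ (1/α) Φ(ζ/α)
  have hφd : ContDiff ℝ 1 (fun s : ℝ => 1/α * Φ (s/α)) :=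
    contDiff_const.mul (hΦdiff.comp (contDiff_id.div_const α))
  have hφ0 : ∀ x : ℝ, 0 ≤ x → 0 ≤ 1/α * Φ (x/α) := fun x hx =>
    mul_nonneg (by positivity) (hΦnonneg _ (div_nonneg hx hα.le))
  have hφanti : AntitoneOn (fun s : ℝ => 1/α * Φ (s/α)) (Set.Ici 0) := by
    intro x hx y hy hxy
    have h2 : Φ (y/α) ≤ Φ (x/α) := hΦmono _ _ (div_nonneg hx hα.le) (by gcongr)
    have h1 : (0:ℝ) ≤ 1/α := by positivity
    exact mul_le_mul_of_nonneg_left h2 h1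
  have hΦint : IntegrableOn Φ (Set.Ioi 0) := by
    by_contra h
    rw [MeasureTheory.integral_undef h] at hΦmass
    norm_num at hΦmass
  have hφint : IntegrableOn (fun s : ℝ => 1/α * Φ (s/α)) (Set.Ioi 0) := by
    have h1 : (0:ℝ) < 1/α := by positivity
    have h2 := (integrableOn_Ioi_comp_mul_right_iff Φ 0 h1).2 (by simpa using hΦint)
    simp_rw [mul_one_div] at h2
    exact h2.const_mul _
  have hφlim := aux_tendsto_zero _ hφ0 hφanti hφint
  have hderneg := aux_deriv_nonpos _ (hφd.differentiable one_ne_zero) hφanti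
  -- bounds
  have hrange : ∀ x : ℝ, w x t ∈ Set.Icc (-M) M := fun x => abs_le.1 (hM x t)
  obtain ⟨CW, hCW⟩ := (isCompact_Icc (a := -M) (b := M)).exists_bound_of_continuousOn
    hW.continuous.continuousOn
  obtain ⟨CQ, hCQ⟩ := (isCompact_Icc (a := -M) (b := M)).exists_bound_of_continuousOn
    hQ1.continuous.continuousOn
  obtain ⟨Cη, hCη⟩ := (isCompact_Icc (a := -M) (b := M)).exists_bound_of_continuousOn
    hη'c.continuousOn
  have hCη0 : 0 ≤ Cη := le_trans (abs_nonneg _) (by simpa using hCη _ (hrange z))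
  have huC1 : ContDiff ℝ 1 (fun x => w x t) := hwC1.comp (contDiff_id.prodMk contDiff_const)
  have hud : Differentiable ℝ (fun x => w x t) := huC1.differentiable one_ne_zero
  -- the two averaged functions
  have hgW : ContDiff ℝ 1 (fun x => W (w x t)) := hW.comp huC1
  have hgWb : ∀ x, |W (w x t)| ≤ CW := fun x => by
    have := hCW _ (hrange x); rwa [Real.norm_eq_abs] at this
  have hgWder : ∀ x, HasDerivAt (fun x' => W (w x' t))
      (deriv W (w x t) * deriv (fun x' => w x' t) x) x := fun x =>
    ((hWd (w x t)).hasDerivAt).comp x ((hud x).hasDerivAt)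
  have hgW'b : ∀ x, |deriv (fun x' => W (w x' t)) x| ≤ L * K := by
    intro x
    rw [(hgWder x).deriv, abs_mul]
    exact mul_le_mul (hWabs _) (hK x t) (abs_nonneg _) hL0
  have hgQ : ContDiff ℝ 1 (fun x => Q (w x t)) := hQ1.comp huC1
  have hgQb : ∀ x, |Q (w x t)| ≤ CQ := fun x => by
    have := hCQ _ (hrange x); rwa [Real.norm_eq_abs] at this
  have hgQder : ∀ x, HasDerivAt (fun x' => Q (w x' t))
      ((deriv η (w x t) * deriv W (w x t)) * deriv (fun x' => w x' t) x) x := fun x =>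
    (hQ (w x t)).comp x ((hud x).hasDerivAt)
  have hgQ'b : ∀ x, |deriv (fun x' => Q (w x' t)) x| ≤ Cη * L * K := by
    intro x
    rw [(hgQder x).deriv, abs_mul, abs_mul]
    have h1 : |deriv η (w x t)| ≤ Cη := by
      have := hCη _ (hrange x); rwa [Real.norm_eq_abs] at this
    have h2 : |deriv η (w x t)| * |deriv W (w x t)| ≤ Cη * L :=
      mul_le_mul h1 (hWabs _) (abs_nonneg _) hCη0
    exact mul_le_mul h2 (hK x t) (abs_nonneg _) (by positivity)
  -- apply the key derivative computation
  have keyW := key_hasDeriv _ hφd hφanti hφint hφlim _ hgW CW (L*K) hgWb hgW'b z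
  have keyQ := key_hasDeriv _ hφd hφanti hφint hφlim _ hgQ CQ (Cη*L*K) hgQb hgQ'b z
  have hAW : HasDerivAt (fun x => nlAvg Φ α (fun x' => W (w x' t)) x)
      (∫ ζ in Set.Ioi (0:ℝ), (-(deriv (fun s : ℝ => 1/α * Φ (s/α)) ζ)) *
        (W (w (z + ζ) t) - W (w z t))) z := by
    simpa only [nlAvg] using keyW.2
  have hAQ : HasDerivAt (fun x => nlAvg Φ α (fun x' => Q (w x' t)) x)
      (∫ ζ in Set.Ioi (0:ℝ), (-(deriv (fun s : ℝ => 1/α * Φ (s/α)) ζ)) *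
        (Q (w (z + ζ) t) - Q (w z t))) z := by
    simpa only [nlAvg] using keyQ.2
  -- rewrite Dterm
  have hpt : ∀ s : ℝ, (∫ σ in (w z t)..s, (∫ μ in (w z t)..σ, deriv (deriv η) μ) * deriv W σ)
      = (Q s - Q (w z t)) - deriv η (w z t) * (W s - W (w z t)) := fun s =>
    pt_eq η W Q hη'd hη''c hη'c hWd hW'c hQ _ s
  have hsplit : Dterm Φ α W η w z t
      = (∫ ζ in Set.Ioi (0:ℝ), (-(deriv (fun s : ℝ => 1/α * Φ (s/α)) ζ)) *
          (Q (w (z + ζ) t) - Q (w z t)))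
        - deriv η (w z t) * ∫ ζ in Set.Ioi (0:ℝ),
            (-(deriv (fun s : ℝ => 1/α * Φ (s/α)) ζ)) *
              (W (w (z + ζ) t) - W (w z t)) := by
    unfold Dterm
    rw [show (∫ ζ in Set.Ioi (0:ℝ),
        (-(deriv (fun s : ℝ => 1/α * Φ (s/α)) ζ)) *
          ∫ σ in (w z t)..(w (z+ζ) t),
            (∫ μ in (w z t)..σ, deriv (deriv η) μ) * deriv W σ)
      = ∫ ζ in Set.Ioi (0:ℝ),
          ((-(deriv (fun s : ℝ => 1/α * Φ (s/α)) ζ)) * (Q (w (z + ζ) t) - Q (w z t))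
            - deriv η (w z t) * ((-(deriv (fun s : ℝ => 1/α * Φ (s/α)) ζ)) *
              (W (w (z + ζ) t) - W (w z t)))) from
      integral_congr_ae (Filter.Eventually.of_forall fun ζ => by simp only [hpt]; ring)]
    rw [integral_sub keyQ.1 (keyW.1.const_mul _), integral_const_mul]
  -- time derivative
  have htder : HasDerivAt (fun s => η (w z s))
      (deriv η (w z t) * deriv (fun x => nlAvg Φ α (fun x' => W (w x' t)) x) z) t := by
    simpa [Function.comp_def] using
      (HasDerivAt.comp t ((hηd (w z t)).hasDerivAt) (hpde z t ht))
  constructor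
  · rw [htder.deriv, hsplit, hAW.deriv, hAQ.deriv]
    ring
  · unfold Dterm
    refine setIntegral_nonneg measurableSet_Ioi fun ζ hζ => ?_
    refine mul_nonneg (neg_nonneg.2 (hderneg ζ hζ)) ?_
    exact pt_nonneg η W hη'd hη''c hmono (fun x => (hW' x).1) _ _
end

section
/- Let α > 0 and let y : ℝ → ℝ be bounded and continuous. Define w(z) = (1/α) ∫₀^∞ e^{−ζ/α} y(z+ζ) dζ. Then w is differentiable on ℝ and satisfies the identity α w'(z) = w(z) − y(z) for every z ∈ ℝ (equivalently, y = w − α ∂_z w). Consequently, if w has finite total variation TV(w) on ℝ, then ∫_ℝ |y(z) − w(z)| dz ≤ α · TV(w). -/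
open MeasureTheory Set intervalIntegral
open scoped NNReal ENNReal


/-- Key lemma: the integral of `|f'|` over `[a,b]` is at most the variation of `f` on `[a,b]`,
for `f` with continuous derivative. -/
lemma integral_abs_deriv_le_evar {f f' : ℝ → ℝ} (hd : ∀ x, HasDerivAt f (f' x) x)
    (hc : Continuous f') {a b : ℝ} (hab : a ≤ b) :
    ENNReal.ofReal (∫ x in a..b, |f' x|) ≤ eVariationOn f (Set.Icc a b) := by
  -- f is Lipschitz on [a,b], so has bounded variation there
  obtain ⟨C, hC⟩ : ∃ C : ℝ≥0, ∀ x ∈ Icc a b, ‖f' x‖₊ ≤ C := by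
    obtain ⟨x₀, -, hx₀⟩ := isCompact_Icc.exists_isMaxOn (nonempty_Icc.2 hab)
      ((continuous_norm.comp hc).continuousOn : ContinuousOn (fun x => ‖f' x‖) (Icc a b))
    exact ⟨‖f' x₀‖₊, fun x hx => by
      simpa [← NNReal.coe_le_coe] using hx₀ hx⟩
  have hlip : LipschitzOnWith C f (Icc a b) :=
    (convex_Icc a b).lipschitzOnWith_of_nnnorm_hasDerivWithin_le
      (fun x hx => (hd x).hasDerivWithinAt) hC
  have hBV : BoundedVariationOn f (Icc a b) := by
    have := hlip.locallyBoundedVariationOn a b (left_mem_Icc.2 hab) (right_mem_Icc.2 hab)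
    simpa [Set.inter_self] using this
  set v : ℝ → ℝ := fun x => (eVariationOn f (Icc a x)).toReal with hv
  have hfin : ∀ x ∈ Icc a b, eVariationOn f (Icc a x) ≠ ⊤ := fun x hx =>
    ((eVariationOn.mono f (Icc_subset_Icc_right hx.2)).trans_lt hBV.lt_top).ne
  have hvmono : ∀ x x', a ≤ x → x ≤ x' → x' ≤ b → v x ≤ v x' := fun x x' hax hxx' hx'b =>
    ENNReal.toReal_mono (hfin x' ⟨hax.trans hxx', hx'b⟩)
      (eVariationOn.mono f (Icc_subset_Icc_right hxx'))
  have hsup : ∀ x x', a ≤ x → x ≤ x' → x' ≤ b → v x + |f x' - f x| ≤ v x' := by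
    intro x x' hax hxx' hx'b
    have hBVs : BoundedVariationOn f (Icc x x') :=
      hBV.mono (Icc_subset_Icc (hax) hx'b)
    have hdist : |f x' - f x| ≤ (eVariationOn f (Icc x x')).toReal := by
      have := hBVs.dist_le (right_mem_Icc.2 hxx') (left_mem_Icc.2 hxx')
      simpa [Real.dist_eq] using this
    have hadd : eVariationOn f (Icc a x) + eVariationOn f (Icc x x')
        = eVariationOn f (Icc a x') := by
      have := eVariationOn.Icc_add_Icc f (s := (Set.univ : Set ℝ)) hax hxx' (Set.mem_univ x)
      simpa [Set.univ_inter] using this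
    have h1 : v x' = v x + (eVariationOn f (Icc x x')).toReal := by
      rw [hv]
      simp only []
      rw [← hadd, ENNReal.toReal_add (hfin x ⟨hax, hxx'.trans hx'b⟩) hBVs]
    linarith
  set G : ℝ → ℝ := fun x => ∫ t in a..x, |f' t| with hG
  have hGint : ∀ c d : ℝ, IntervalIntegrable (fun t => |f' t|) volume c d := fun c d =>
    (hc.abs).intervalIntegrable c d
  have hGcont : Continuous G := intervalIntegral.continuous_primitive hGint a
  suffices H : ∀ ε : ℝ, 0 < ε → G b ≤ v b + ε * (b - a) by
    have h2 : G b ≤ v b := by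
      refine le_of_forall_pos_le_add (fun δ hδ => ?_)
      have hba : (0:ℝ) ≤ b - a := by linarith
      have := H (δ / (b - a + 1)) (by positivity)
      have h3 : δ / (b - a + 1) * (b - a) ≤ δ := by
        rw [div_mul_eq_mul_div, div_le_iff₀ (by linarith)]
        nlinarith
      linarith
    calc ENNReal.ofReal (G b) ≤ ENNReal.ofReal (v b) := ENNReal.ofReal_le_ofReal h2
      _ = eVariationOn f (Icc a b) := ENNReal.ofReal_toReal hBV
  intro ε hε
  set A : Set ℝ := {x | x ∈ Icc a b ∧ G x ≤ v x + ε * (x - a)} with hA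
  have haA : a ∈ A := by
    constructor
    · exact left_mem_Icc.2 hab
    · have : G a = 0 := intervalIntegral.integral_same
      have h0 : (0:ℝ) ≤ v a := ENNReal.toReal_nonneg
      rw [this]; nlinarith
  have hbdd : BddAbove A := ⟨b, fun x hx => hx.1.2⟩
  set c := sSup A with hc'
  have hac : a ≤ c := le_csSup hbdd haA
  have hcb : c ≤ b := csSup_le ⟨a, haA⟩ (fun x hx => hx.1.2)
  have hcA : c ∈ A := by
    refine ⟨⟨hac, hcb⟩, ?_⟩
    refine le_of_forall_pos_le_add (fun δ hδ => ?_)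
    obtain ⟨η, hη, hη'⟩ := Metric.continuous_iff.1 hGcont c δ hδ
    obtain ⟨x, hxA, hxc⟩ := exists_lt_of_lt_csSup ⟨a, haA⟩ (show c - η < c by linarith)
    have hxle : x ≤ c := le_csSup hbdd hxA
    have h1 : |G x - G c| < δ := by
      have := hη' x (by rw [Real.dist_eq]; rw [abs_of_nonpos (by linarith)]; linarith)
      simpa [Real.dist_eq] using this
    have h2 : ε * (x - a) ≤ ε * (c - a) := by nlinarith
    have h3 : v x ≤ v c := hvmono x c hxA.1.1 hxle hcb
    have := hxA.2
    cases abs_cases (G x - G c) with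
    | inl h => linarith [h.1]
    | inr h => linarith [h.1]
  have hcbeq : c = b := by
    by_contra hne
    have hclt : c < b := lt_of_le_of_ne hcb hne
    obtain ⟨η, hη, hη'⟩ := Metric.continuousAt_iff.1 (hc.continuousAt (x := c)) (ε/2) (by linarith)
    set x' := min (c + η/2) b with hx'
    have hcx' : c < x' := lt_min (by linarith) hclt
    have hx'b : x' ≤ b := min_le_right _ _
    have hbound : ∀ t ∈ Icc c x', |f' t - f' c| ≤ ε/2 := by
      intro t ht
      have h1 : dist t c < η := by
        rw [Real.dist_eq, abs_of_nonneg (by linarith [ht.1])]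
        have : x' ≤ c + η/2 := min_le_left _ _
        linarith [ht.2]
      have := hη' h1
      rw [Real.dist_eq] at this
      linarith
    have key1 : ∫ t in c..x', |f' t| ≤ (|f' c| + ε/2) * (x' - c) := by
      have h1 : ∫ t in c..x', |f' t| ≤ ∫ t in c..x', (|f' c| + ε/2) := by
        refine intervalIntegral.integral_mono_on hcx'.le (hGint c x')
          intervalIntegrable_const (fun t ht => ?_)
        have h2 := hbound t ht
        calc |f' t| = |f' c + (f' t - f' c)| := by ring_nf
          _ ≤ |f' c| + |f' t - f' c| := abs_add_le _ _
          _ ≤ |f' c| + ε/2 := by linarith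
      rw [intervalIntegral.integral_const, smul_eq_mul] at h1
      linarith [h1]
    have hmain : HasDerivAt f (f' c) c := hd c
    have key2 : |f' c| * (x' - c) ≤ |f x' - f c| + ε/2 * (x' - c) := by
      have hsub : f x' - f c = ∫ t in c..x', f' t :=
        (intervalIntegral.integral_eq_sub_of_hasDerivAt (fun t _ => hd t)
          (hc.intervalIntegrable _ _)).symm
      have hdiff : ‖∫ t in c..x', (f' t - f' c)‖ ≤ ε/2 * |x' - c| := by
        refine intervalIntegral.norm_integral_le_of_norm_le_const (fun t ht => ?_)
        have ht' : t ∈ Icc c x' := by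
          rw [Set.uIoc_of_le hcx'.le] at ht
          exact ⟨ht.1.le, ht.2⟩
        simpa [Real.norm_eq_abs] using hbound t ht'
      rw [Real.norm_eq_abs] at hdiff
      have hsplit : ∫ t in c..x', f' t
          = (x' - c) * f' c + ∫ t in c..x', (f' t - f' c) := by
        rw [intervalIntegral.integral_sub (hc.intervalIntegrable _ _) intervalIntegrable_const,
          intervalIntegral.integral_const, smul_eq_mul]
        ring
      have habs : |(x' - c) * f' c| = (x' - c) * |f' c| := by
        rw [abs_mul, abs_of_nonneg (by linarith)]
      have h4 : |(x' - c) * f' c| ≤ |f x' - f c| + |∫ t in c..x', (f' t - f' c)| := by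
        rw [hsub, hsplit]
        have := abs_add_le ((x' - c) * f' c + ∫ t in c..x', (f' t - f' c))
          (-(∫ t in c..x', (f' t - f' c)))
        simpa [abs_neg] using this
      rw [abs_of_nonneg (show (0:ℝ) ≤ x' - c by linarith)] at hdiff
      rw [habs] at h4
      nlinarith
    have key3 : |f x' - f c| ≤ v x' - v c := by
      have := hsup c x' hac hcx'.le hx'b
      linarith
    have hGadd : G x' = G c + ∫ t in c..x', |f' t| :=
      (intervalIntegral.integral_add_adjacent_intervals (hGint a c) (hGint c x')).symm
    have hGx' : G x' ≤ v x' + ε * (x' - a) := by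
      have hc2 := hcA.2
      nlinarith [key1, key2, key3, hGadd, hcx'.le]
    exact absurd (le_csSup hbdd ⟨⟨hac.trans hcx'.le, hx'b⟩, hGx'⟩) (not_le.2 hcx')
  have := hcA.2
  rw [hcbeq] at this
  exact this

lemma aux_hasDerivAt (α : ℝ) (hα : 0 < α)
    (y : ℝ → ℝ) (M : ℝ) (hM : ∀ z, |y z| ≤ M) (hyC : Continuous y)
    (w : ℝ → ℝ)
    (hw : ∀ z : ℝ, w z = (1/α) * ∫ ζ in Set.Ioi (0:ℝ), Real.exp (-ζ/α) * y (z + ζ)) :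
    ∀ z : ℝ, HasDerivAt w ((w z - y z)/α) z := by
  set g : ℝ → ℝ := fun t => Real.exp (-t/α) * y t with hg
  have hg_cont : Continuous g := (Real.continuous_exp.comp (by fun_prop)).mul hyC
  have hg_int : ∀ z : ℝ, IntegrableOn g (Set.Ioi z) := by
    intro z
    have h1 : IntegrableOn (fun t => M * Real.exp (-(1/α) * t)) (Set.Ioi z) :=
      (exp_neg_integrableOn_Ioi z (by positivity)).const_mul M
    refine h1.mono' (hg_cont.aestronglyMeasurable.restrict) ?_
    filter_upwards with t
    have habs : |g t| = Real.exp (-t/α) * |y t| := by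
      show |Real.exp (-t/α) * y t| = _
      rw [abs_mul, abs_of_nonneg (Real.exp_pos _).le]
    rw [Real.norm_eq_abs, habs]
    have h3 : -t/α = -(1/α) * t := by ring
    rw [h3]
    nlinarith [Real.exp_pos (-(1/α)*t), hM t, abs_nonneg (y t)]
  set F : ℝ → ℝ := fun z => ∫ t in Set.Ioi z, g t with hF
  have hshift : ∀ z : ℝ, w z = (1/α) * (Real.exp (z/α) * F z) := by
    intro z
    rw [hw z]
    congr 1
    have hmp : MeasurePreserving (· + z) (volume : Measure ℝ) volume :=
      measurePreserving_add_right volume z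
    have hemb : MeasurableEmbedding (· + z : ℝ → ℝ) :=
      (MeasurableEquiv.addRight z).measurableEmbedding
    have hpre : (· + z : ℝ → ℝ) ⁻¹' (Set.Ioi z) = Set.Ioi 0 := by
      ext x; simp
    have hmap := hmp.setIntegral_preimage_emb hemb
      (fun t => Real.exp (z/α) * g t) (Set.Ioi z)
    rw [hpre] at hmap
    show _ = Real.exp (z/α) * ∫ t in Set.Ioi z, g t
    rw [← MeasureTheory.integral_const_mul, ← hmap]
    refine setIntegral_congr_fun measurableSet_Ioi (fun ζ hζ => ?_)
    show Real.exp (-ζ/α) * y (z + ζ)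
        = Real.exp (z/α) * (Real.exp (-(ζ + z)/α) * y (ζ + z))
    rw [← mul_assoc, ← Real.exp_add]
    have : z/α + -(ζ + z)/α = -ζ/α := by field_simp; ring
    rw [this, add_comm z ζ]
  have hFderiv : ∀ z : ℝ, HasDerivAt F (-(g z)) z := by
    intro z₀
    set b := z₀ + 1 with hb
    have heq : ∀ᶠ x in nhds z₀, F x = (∫ t in x..b, g t) + F b := by
      have hmem : Set.Iio b ∈ nhds z₀ := Iio_mem_nhds (by rw [hb]; linarith)
      filter_upwards [hmem] with x hx
      have hxb : x ≤ b := le_of_lt hx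
      have hunion : Set.Ioc x b ∪ Set.Ioi b = Set.Ioi x := Set.Ioc_union_Ioi_eq_Ioi hxb
      have hdisj : Disjoint (Set.Ioc x b) (Set.Ioi b) := by
        rw [Set.disjoint_left]; intro t ht1 ht2; exact absurd ht1.2 (not_le.2 ht2)
      have hsplit : ∫ t in Set.Ioi x, g t
          = (∫ t in Set.Ioc x b, g t) + ∫ t in Set.Ioi b, g t := by
        rw [← hunion, setIntegral_union hdisj measurableSet_Ioi
          ((hg_int x).mono_set Set.Ioc_subset_Ioi_self) (hg_int b)]
      show (∫ t in Set.Ioi x, g t) = (∫ t in x..b, g t) + ∫ t in Set.Ioi b, g t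
      rw [hsplit, intervalIntegral.integral_of_le hxb]
    have h1 : HasDerivAt (fun x => (∫ t in x..b, g t) + F b) (-(g z₀)) z₀ := by
      refine HasDerivAt.add_const _ ?_
      exact intervalIntegral.integral_hasDerivAt_left (hg_cont.intervalIntegrable _ _)
        hg_cont.stronglyMeasurable.stronglyMeasurableAtFilter hg_cont.continuousAt
    exact (Filter.EventuallyEq.hasDerivAt_iff heq).2 h1
  intro z
  have h1 : HasDerivAt (fun x : ℝ => Real.exp (x/α)) (Real.exp (z/α) * (1/α)) z := by
    have := ((hasDerivAt_id z).div_const α).exp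
    simpa using this
  have h2 : HasDerivAt (fun x => Real.exp (x/α) * F x)
      (Real.exp (z/α) * (1/α) * F z + Real.exp (z/α) * (-(g z))) z := h1.mul (hFderiv z)
  have h3 := h2.const_mul (1/α)
  have hval : (1/α) * (Real.exp (z/α) * (1/α) * F z + Real.exp (z/α) * (-(g z)))
      = (w z - y z)/α := by
    rw [hshift z]
    have hexp : Real.exp (z/α) * Real.exp (-z/α) = 1 := by
      rw [← Real.exp_add]; simp [neg_div]
    have hgz : g z = Real.exp (-z/α) * y z := rfl
    have hyz : Real.exp (z/α) * g z = y z := by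
      rw [hgz, ← mul_assoc, hexp, one_mul]
    linear_combination (-(1/α)) * hyz
  rw [hval] at h3
  exact h3.congr_of_eventuallyEq (Filter.Eventually.of_forall hshift)

/-- for the exponential kernel, the averaged function
`w(z) = (1/α)∫₀^∞ e^{−ζ/α} y(z+ζ) dζ` of a bounded continuous `y` is
differentiable and satisfies `α w' = w − y`; consequently, if `w` has finite
total variation then `∫_ℝ |y − w| ≤ α · TV(w)`. -/
theorem stmt_16
    (α : ℝ) (hα : 0 < α)
    (y : ℝ → ℝ) (hyB : ∃ M, ∀ z, |y z| ≤ M) (hyC : Continuous y)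
    (w : ℝ → ℝ)
    (hw : ∀ z : ℝ, w z = (1/α) * ∫ ζ in Set.Ioi (0:ℝ), Real.exp (-ζ/α) * y (z + ζ)) :
    (∀ z : ℝ, DifferentiableAt ℝ w z) ∧
    (∀ z : ℝ, α * deriv w z = w z - y z) ∧
    (BoundedVariationOn w Set.univ →
      Integrable (fun z => y z - w z) ∧
      ∫ z : ℝ, |y z - w z| ≤ α * (eVariationOn w Set.univ).toReal) := by
  obtain ⟨M, hM⟩ := hyB
  have hwd := aux_hasDerivAt α hα y M hM hyC w hw
  refine ⟨fun z => (hwd z).differentiableAt, fun z => ?_, fun hBV => ?_⟩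
  · rw [(hwd z).deriv]; field_simp
  · have hwdiff : Differentiable ℝ w := fun z => (hwd z).differentiableAt
    have hwC : Continuous w := hwdiff.continuous
    have hw'C : Continuous (fun z => (w z - y z)/α) := (hwC.sub hyC).div_const α
    have key : ∀ n : ℕ, ∫ x in (-(n:ℝ))..n, |(w x - y x)/α| ≤
        (eVariationOn w Set.univ).toReal := by
      intro n
      have hn : (-(n:ℝ)) ≤ n := neg_le_self n.cast_nonneg
      have h1 := integral_abs_deriv_le_evar hwd hw'C hn
      have h3 : ENNReal.ofReal (∫ x in (-(n:ℝ))..n, |(w x - y x)/α|) ≤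
          eVariationOn w Set.univ :=
        h1.trans (eVariationOn.mono w (Set.subset_univ _))
      have h4 : (0:ℝ) ≤ ∫ x in (-(n:ℝ))..n, |(w x - y x)/α| :=
        intervalIntegral.integral_nonneg hn (fun x _ => abs_nonneg _)
      have h5 := ENNReal.toReal_mono hBV h3
      rwa [ENNReal.toReal_ofReal h4] at h5
    have habs : ∀ z : ℝ, |y z - w z| = α * |(w z - y z)/α| := by
      intro z
      rw [abs_div, abs_of_pos hα, abs_sub_comm]
      field_simp
    have hbound : ∀ n : ℕ, (∫ x in (-(n:ℝ))..n, ‖y x - w x‖) ≤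
        α * (eVariationOn w Set.univ).toReal := by
      intro n
      have heq : (fun x => ‖y x - w x‖) = fun x => α * |(w x - y x)/α| :=
        funext fun x => by rw [Real.norm_eq_abs, habs x]
      rw [heq, intervalIntegral.integral_const_mul]
      exact mul_le_mul_of_nonneg_left (key n) hα.le
    have hneg : Filter.Tendsto (fun n : ℕ => -(n:ℝ)) Filter.atTop Filter.atBot :=
      Filter.tendsto_neg_atBot_iff.2 tendsto_natCast_atTop_atTop
    have hpos : Filter.Tendsto (fun n : ℕ => (n:ℝ)) Filter.atTop Filter.atTop :=
      tendsto_natCast_atTop_atTop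
    have hint : Integrable (fun z => y z - w z) := by
      refine integrable_of_intervalIntegral_norm_bounded
        (α * (eVariationOn w Set.univ).toReal)
        (fun n : ℕ => ((hyC.sub hwC).integrableOn_Ioc)) hneg hpos ?_
      exact Filter.Eventually.of_forall hbound
    refine ⟨hint, ?_⟩
    have habs' : Integrable (fun z => |y z - w z|) := hint.abs
    have htend := intervalIntegral_tendsto_integral habs' hneg hpos
    refine le_of_tendsto htend (Filter.Eventually.of_forall (fun n => ?_))
    have : (fun x => |y x - w x|) = fun x => ‖y x - w x‖ :=
      funext fun x => (Real.norm_eq_abs _).symm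
    rw [this]
    exact hbound n
end

section
/- Let Φ : [0,∞) → [0,∞) be continuously differentiable, non-increasing, with ∫₀^∞ Φ = 1 and Φ(0) > 0, and let α > 0, Φ_α(ζ) = (1/α)Φ(ζ/α). Let y : ℝ → ℝ be bounded and continuous, and let w(z) = ∫₀^∞ Φ_α(ζ) y(z+ζ) dζ be its average. Suppose w has finite total variation TV(w) on ℝ. Then for every R > 0, ∫_{−R}^{R} |w(z) − y(z)| dz ≤ (α/Φ(0)) · TV(w) + (2R ‖y‖_∞ / Φ(0)) · ∫₀^∞ |Φ(0)Φ(ζ) + Φ'(ζ)| dζ. In particular, the last term vanishes for every ζ if and only if Φ(ζ) = e^{−ζ} Φ(0)-normalized, i.e., the exponential kernel is the only kernel for which this bound forces w − y → 0 in L¹_loc as α → 0. -/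
open MeasureTheory Set Filter


lemma phi_integrable (Φ : ℝ → ℝ) (hΦmass : ∫ ζ in Set.Ioi (0:ℝ), Φ ζ = 1) :
    IntegrableOn Φ (Ioi (0:ℝ)) := by
  by_contra h
  rw [MeasureTheory.integral_undef h] at hΦmass
  norm_num at hΦmass

lemma phi_tendsto (Φ : ℝ → ℝ)
    (hΦmono : ∀ x y : ℝ, 0 ≤ x → x ≤ y → Φ y ≤ Φ x)
    (hΦnonneg : ∀ z : ℝ, 0 ≤ z → 0 ≤ Φ z)
    (hint : IntegrableOn Φ (Ioi (0:ℝ))) :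
    Tendsto Φ atTop (nhds 0) := by
  set Ψ : ℝ → ℝ := fun t => Φ (max t 0) with hΨ
  have hΨanti : Antitone Ψ := fun s t hst =>
    hΦmono _ _ (le_max_right s 0) (max_le_max hst le_rfl)
  have hbdd : BddBelow (Set.range Ψ) :=
    ⟨0, by rintro _ ⟨t, rfl⟩; exact hΦnonneg _ (le_max_right t 0)⟩
  have htendsto : Tendsto Ψ atTop (nhds (⨅ t, Ψ t)) := tendsto_atTop_ciInf hΨanti hbdd
  have heq : Φ =ᶠ[atTop] Ψ := by
    filter_upwards [eventually_ge_atTop (0:ℝ)] with t ht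
    simp [hΨ, max_eq_left ht]
  have htendsto' : Tendsto Φ atTop (nhds (⨅ t, Ψ t)) := htendsto.congr' heq.symm
  have hL0 : 0 ≤ ⨅ t, Ψ t := le_ciInf fun t => hΦnonneg _ (le_max_right t 0)
  rcases eq_or_lt_of_le hL0 with h0 | hpos
  · rwa [← h0] at htendsto'
  · exfalso
    have hge : ∀ t ∈ Ioi (0:ℝ), (⨅ t, Ψ t) ≤ Φ t := by
      intro t _
      have := ciInf_le hbdd t
      simpa [hΨ, max_eq_left (le_of_lt (by assumption : (0:ℝ) < t))] using this
    have hconst : IntegrableOn (fun _ : ℝ => (⨅ t, Ψ t)) (Ioi (0:ℝ)) := by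
      apply Integrable.mono' hint aestronglyMeasurable_const
      rw [ae_restrict_iff' measurableSet_Ioi]
      filter_upwards with t ht
      rw [Real.norm_eq_abs, abs_of_nonneg hL0]
      exact hge t ht
    rw [integrableOn_const_iff] at hconst
    rcases hconst with h | h
    · exact absurd (enorm_eq_zero.1 h) (ne_of_gt hpos)
    · simp [Real.volume_Ioi] at h

lemma deriv_phi_nonpos (Φ : ℝ → ℝ) (hΦdiff : ContDiff ℝ 1 Φ)
    (hΦmono : ∀ x y : ℝ, 0 ≤ x → x ≤ y → Φ y ≤ Φ x) :
    ∀ t : ℝ, 0 ≤ t → deriv Φ t ≤ 0 := by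
  intro t ht
  have hd : HasDerivAt Φ (deriv Φ t) t := (hΦdiff.differentiable one_ne_zero t).hasDerivAt
  rw [hasDerivAt_iff_tendsto_slope] at hd
  have hd' : Tendsto (slope Φ t) (nhdsWithin t (Ioi t)) (nhds (deriv Φ t)) :=
    hd.mono_left (nhdsWithin_mono t fun z hz => ne_of_gt hz)
  refine le_of_tendsto hd' ?_
  filter_upwards [self_mem_nhdsWithin] with z hz
  have hz' : t < z := hz
  rw [slope_def_field]
  have h1 : Φ z ≤ Φ t := hΦmono t z ht (le_of_lt hz')
  have h2 : 0 < z - t := by linarith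
  exact div_nonpos_of_nonpos_of_nonneg (by linarith) (le_of_lt h2)

lemma deriv_phi_integrable (Φ : ℝ → ℝ) (hΦdiff : ContDiff ℝ 1 Φ)
    (hΦmono : ∀ x y : ℝ, 0 ≤ x → x ≤ y → Φ y ≤ Φ x)
    (hΦnonneg : ∀ z : ℝ, 0 ≤ z → 0 ≤ Φ z) :
    IntegrableOn (deriv Φ) (Ioi (0:ℝ)) := by
  have hc : Continuous (deriv Φ) := hΦdiff.continuous_deriv le_rfl
  apply integrableOn_Ioi_of_intervalIntegral_norm_bounded (Φ 0) (0:ℝ)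
    (fun i => hc.integrableOn_Ioc) (tendsto_id (α := ℝ))
  filter_upwards [eventually_ge_atTop (0:ℝ)] with i hi
  have hftc : ∫ x in (0:ℝ)..i, deriv Φ x = Φ i - Φ 0 :=
    intervalIntegral.integral_deriv_eq_sub
      (fun x _ => (hΦdiff.differentiable one_ne_zero x)) (hc.intervalIntegrable 0 i)
  have hcongr : ∫ x in (0:ℝ)..i, ‖deriv Φ x‖ = ∫ x in (0:ℝ)..i, -deriv Φ x := by
    apply intervalIntegral.integral_congr
    intro x hx
    rw [Set.uIcc_of_le hi] at hx
    simp only [Real.norm_eq_abs]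
    rw [abs_of_nonpos (deriv_phi_nonpos Φ hΦdiff hΦmono x hx.1)]
  show ∫ x in (0:ℝ)..i, ‖deriv Φ x‖ ≤ Φ 0
  rw [hcongr, intervalIntegral.integral_neg, hftc]
  have := hΦnonneg i hi
  linarith

lemma w_repr (Φ : ℝ → ℝ) (α : ℝ) (hα : 0 < α) (y : ℝ → ℝ) (z : ℝ) :
    ∫ ζ in Ioi (0:ℝ), (1/α) * Φ (ζ/α) * y (z + ζ) = ∫ t in Ioi (0:ℝ), Φ t * y (z + α * t) := by
  have h := MeasureTheory.integral_comp_mul_left_Ioi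
    (fun ζ => (1/α) * Φ (ζ/α) * y (z + ζ)) 0 hα
  simp only [mul_zero, smul_eq_mul] at h
  have h0 : ∀ x : ℝ, (1/α) * Φ ((α*x)/α) * y (z + α*x) = (1/α) * (Φ x * y (z + α * x)) := by
    intro x
    rw [mul_div_cancel_left₀ _ (ne_of_gt hα)]
    ring
  rw [funext h0, MeasureTheory.integral_const_mul] at h
  have hne : α ≠ 0 := ne_of_gt hα
  field_simp at h
  rw [show (fun ζ : ℝ => 1 / α * Φ (ζ / α) * y (z + ζ))
      = fun x : ℝ => Φ (x / α) * y (z + x) / α from funext fun x => by ring]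
  exact h.symm

set_option maxHeartbeats 1600000 in
lemma main_ineq (Φ : ℝ → ℝ) (α : ℝ) (hα : 0 < α)
    (hΦdiff : ContDiff ℝ 1 Φ)
    (hΦmono : ∀ x y : ℝ, 0 ≤ x → x ≤ y → Φ y ≤ Φ x)
    (hΦnonneg : ∀ z : ℝ, 0 ≤ z → 0 ≤ Φ z)
    (hΦmass : ∫ ζ in Set.Ioi (0:ℝ), Φ ζ = 1)
    (hΦ0 : 0 < Φ 0)
    (y : ℝ → ℝ) (hyB : ∃ M, ∀ z, |y z| ≤ M) (hyC : Continuous y)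
    (w : ℝ → ℝ)
    (hw : ∀ z : ℝ, w z = ∫ ζ in Set.Ioi (0:ℝ), (1/α) * Φ (ζ/α) * y (z + ζ))
    (hwBV : BoundedVariationOn w Set.univ)
    (R : ℝ) (hR : 0 < R) :
    ∫ z in Set.Icc (-R) R, |w z - y z| ≤
        (α / Φ 0) * (eVariationOn w Set.univ).toReal +
          (2 * R * (⨆ z : ℝ, |y z|) / Φ 0) *
            ∫ ζ in Set.Ioi (0:ℝ), |Φ 0 * Φ ζ + deriv Φ ζ| := by
  obtain ⟨M₀, hM₀⟩ := hyB
  set M := ⨆ z : ℝ, |y z| with hMdef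
  have hbdd : BddAbove (Set.range fun z => |y z|) := ⟨M₀, by rintro _ ⟨z, rfl⟩; exact hM₀ z⟩
  have hM : ∀ z, |y z| ≤ M := fun z => le_ciSup hbdd z
  have hM0 : 0 ≤ M := le_trans (abs_nonneg _) (hM 0)
  have hαne : α ≠ 0 := ne_of_gt hα
  have hΦ0ne : Φ 0 ≠ 0 := ne_of_gt hΦ0
  have hΦc : Continuous Φ := hΦdiff.continuous
  have hΦ'c : Continuous (deriv Φ) := hΦdiff.continuous_deriv le_rfl
  have hΦint : IntegrableOn Φ (Ioi 0) := phi_integrable Φ hΦmass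
  have hΦ'int : IntegrableOn (deriv Φ) (Ioi 0) :=
    deriv_phi_integrable Φ hΦdiff hΦmono hΦnonneg
  have hΦtend : Tendsto Φ atTop (nhds 0) := phi_tendsto Φ hΦmono hΦnonneg hΦint
  have hw' : ∀ z, w z = ∫ t in Ioi (0:ℝ), Φ t * y (z + α * t) :=
    fun z => (hw z).trans (w_repr Φ α hα y z)
  set K := ∫ ζ in Set.Ioi (0:ℝ), |Φ 0 * Φ ζ + deriv Φ ζ| with hKdef
  -- integrability of the basic integrands
  have hyInt : ∀ z : ℝ, IntegrableOn (fun t => Φ t * y (z + α * t)) (Ioi 0) := by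
    intro z
    apply Integrable.mono' (hΦint.norm.mul_const M)
    · exact (hΦc.mul (hyC.comp (continuous_const.add
        (continuous_const.mul continuous_id)))).aestronglyMeasurable
    · filter_upwards with t
      rw [Real.norm_eq_abs, abs_mul]
      exact mul_le_mul_of_nonneg_left (hM _) (abs_nonneg _)
  have hy'Int : ∀ z : ℝ, IntegrableOn (fun t => deriv Φ t * y (z + α * t)) (Ioi 0) := by
    intro z
    apply Integrable.mono' (hΦ'int.norm.mul_const M)
    · exact (hΦ'c.mul (hyC.comp (continuous_const.add
        (continuous_const.mul continuous_id)))).aestronglyMeasurable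
    · filter_upwards with t
      rw [Real.norm_eq_abs, abs_mul]
      exact mul_le_mul_of_nonneg_left (hM _) (abs_nonneg _)
  set g : ℝ → ℝ :=
    fun z => -(Φ 0 / α) * y z - (1/α) * ∫ t in Ioi (0:ℝ), deriv Φ t * y (z + α * t) with hgdef
  have hIcont : Continuous (fun z => ∫ t in Ioi (0:ℝ), deriv Φ t * y (z + α * t)) := by
    apply continuous_of_dominated (bound := fun t => ‖deriv Φ t‖ * M)
    · intro z
      exact (hΦ'c.mul (hyC.comp (continuous_const.add
        (continuous_const.mul continuous_id)))).aestronglyMeasurable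
    · intro z
      filter_upwards with t
      rw [Real.norm_eq_abs, abs_mul]
      exact mul_le_mul_of_nonneg_left (hM _) (abs_nonneg _)
    · exact hΦ'int.norm.mul_const M
    · filter_upwards with t
      exact continuous_const.mul (hyC.comp (continuous_id.add continuous_const))
  have hgc : Continuous g := by
    rw [hgdef]
    exact (continuous_const.mul hyC).sub (continuous_const.mul hIcont)
  have hwc : Continuous w := by
    rw [show w = fun z => ∫ t in Ioi (0:ℝ), Φ t * y (z + α * t) from funext hw']
    apply continuous_of_dominated (bound := fun t => ‖Φ t‖ * M)
    · intro z
      exact (hΦc.mul (hyC.comp (continuous_const.add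
        (continuous_const.mul continuous_id)))).aestronglyMeasurable
    · intro z
      filter_upwards with t
      rw [Real.norm_eq_abs, abs_mul]
      exact mul_le_mul_of_nonneg_left (hM _) (abs_nonneg _)
    · exact hΦint.norm.mul_const M
    · filter_upwards with t
      exact continuous_const.mul (hyC.comp (continuous_id.add continuous_const))
  -- key identity : ∫_a^b g = w b - w a
  have hkey : ∀ a b : ℝ, a ≤ b → (∫ z in a..b, g z) = w b - w a := by
    intro a b hab
    set Y : ℝ → ℝ := fun c => ∫ u in (0:ℝ)..c, y u with hYdef
    have hY : ∀ c, HasDerivAt Y (y c) c :=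
      fun c => (hyC.integral_hasStrictDerivAt 0 c).hasDerivAt
    have hYc : Continuous Y := by
      have : Differentiable ℝ Y := fun c => (hY c).differentiableAt
      exact this.continuous
    set D : ℝ → ℝ := fun t => Y (b + α * t) - Y (a + α * t) with hDdef
    have hDinterval : ∀ t, D t = ∫ u in (a + α*t)..(b + α*t), y u := by
      intro t
      have h1 := intervalIntegral.integral_add_adjacent_intervals
        (a := (0:ℝ)) (b := a + α*t) (c := b + α*t)
        (hyC.intervalIntegrable (μ := volume) _ _) (hyC.intervalIntegrable (μ := volume) _ _)
      simp only [hDdef, hYdef]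
      linarith [h1]
    have hD : ∀ t, HasDerivAt D (α * y (b + α*t) - α * y (a + α*t)) t := by
      intro t
      have hin : ∀ c : ℝ, HasDerivAt (fun s : ℝ => c + α * s) α t := by
        intro c
        simpa using ((hasDerivAt_id t).const_mul α).const_add c
      have h1 : HasDerivAt (fun s => Y (b + α * s)) (y (b + α*t) * α) t := by
        have := (hY (b + α*t)).comp t (hin b); exact this
      have h2 : HasDerivAt (fun s => Y (a + α * s)) (y (a + α*t) * α) t := by
        have := (hY (a + α*t)).comp t (hin a); exact this
      have := h1.sub h2
      rw [show α * y (b + α*t) - α * y (a + α*t) = y (b + α*t) * α - y (a + α*t) * α by ring]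
      exact this
    have hDcont : Continuous D :=
      (hYc.comp (continuous_const.add (continuous_const.mul continuous_id))).sub
        (hYc.comp (continuous_const.add (continuous_const.mul continuous_id)))
    have hDbound : ∀ t, |D t| ≤ M * (b - a) := by
      intro t
      rw [hDinterval t]
      have h1 : ‖∫ u in (a + α*t)..(b + α*t), y u‖ ≤ M * |(b + α*t) - (a + α*t)| :=
        intervalIntegral.norm_integral_le_of_norm_le_const fun u _ => by
          rw [Real.norm_eq_abs]; exact hM u
      rw [Real.norm_eq_abs] at h1
      calc |∫ u in (a + α*t)..(b + α*t), y u| ≤ M * |(b + α*t) - (a + α*t)| := h1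
        _ = M * (b - a) := by rw [show (b + α*t) - (a + α*t) = b - a by ring,
              abs_of_nonneg (by linarith)]
    have hint1 : IntegrableOn (fun t => deriv Φ t * D t) (Ioi 0) := by
      apply Integrable.mono' (hΦ'int.norm.mul_const (M * (b - a)))
      · exact (hΦ'c.mul hDcont).aestronglyMeasurable
      · filter_upwards with t
        rw [Real.norm_eq_abs, abs_mul]
        exact mul_le_mul_of_nonneg_left (hDbound t) (abs_nonneg _)
    have hint2 : IntegrableOn (fun t => Φ t * (α * y (b + α*t) - α * y (a + α*t))) (Ioi 0) := by
      apply Integrable.mono' (hΦint.norm.mul_const (α * M + α * M))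
      · exact (hΦc.mul ((continuous_const.mul (hyC.comp (continuous_const.add
          (continuous_const.mul continuous_id)))).sub
          (continuous_const.mul (hyC.comp (continuous_const.add
          (continuous_const.mul continuous_id)))))).aestronglyMeasurable
      · filter_upwards with t
        rw [Real.norm_eq_abs, abs_mul]
        apply mul_le_mul_of_nonneg_left _ (abs_nonneg _)
        calc |α * y (b + α*t) - α * y (a + α*t)|
            ≤ |α * y (b + α*t)| + |α * y (a + α*t)| := abs_sub _ _
          _ ≤ α * M + α * M := by
              rw [abs_mul, abs_mul, abs_of_pos hα]
              exact add_le_add (mul_le_mul_of_nonneg_left (hM _) hα.le)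
                (mul_le_mul_of_nonneg_left (hM _) hα.le)
    have hparts : ∫ t in Ioi (0:ℝ),
        (deriv Φ t * D t + Φ t * (α * y (b + α*t) - α * y (a + α*t))) = 0 - Φ 0 * D 0 := by
      apply MeasureTheory.integral_Ioi_deriv_mul_eq_sub
        (u := Φ) (u' := deriv Φ) (v := D)
        (v' := fun t => α * y (b + α*t) - α * y (a + α*t))
      · exact fun x _ => (hΦdiff.differentiable one_ne_zero x).hasDerivAt
      · exact fun x _ => hD x
      · exact hint1.add hint2
      · exact ((hΦc.mul hDcont).continuousAt).continuousWithinAt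
      · have hb : Tendsto (fun t => Φ t * (M * (b - a))) atTop (nhds 0) := by
          simpa using hΦtend.mul_const (M * (b - a))
        apply squeeze_zero_norm' _ hb
        filter_upwards [eventually_ge_atTop (0:ℝ)] with t ht
        show ‖Φ t * D t‖ ≤ Φ t * (M * (b - a))
        rw [Real.norm_eq_abs, abs_mul, abs_of_nonneg (hΦnonneg t ht)]
        exact mul_le_mul_of_nonneg_left (hDbound t) (hΦnonneg t ht)
    have h3 : ∫ t in Ioi (0:ℝ), Φ t * (α * y (b + α*t) - α * y (a + α*t))
        = α * (w b - w a) := by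
      have e : (fun t => Φ t * (α * y (b + α*t) - α * y (a + α*t)))
          = fun t => α * (Φ t * y (b + α*t)) - α * (Φ t * y (a + α*t)) :=
        funext fun t => by ring
      rw [e, MeasureTheory.integral_sub ((hyInt b).const_mul α) ((hyInt a).const_mul α),
        MeasureTheory.integral_const_mul, MeasureTheory.integral_const_mul, ← hw' b, ← hw' a]
      ring
    have hsplit : ∫ t in Ioi (0:ℝ), deriv Φ t * D t = -(Φ 0 * D 0) - α * (w b - w a) := by
      rw [MeasureTheory.integral_add hint1 hint2] at hparts
      linarith [hparts, h3]
    have hfub : ∫ z in a..b, (∫ t in Ioi (0:ℝ), deriv Φ t * y (z + α * t))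
        = ∫ t in Ioi (0:ℝ), deriv Φ t * D t := by
      rw [intervalIntegral.integral_of_le hab]
      rw [MeasureTheory.integral_integral_swap]
      · apply MeasureTheory.integral_congr_ae
        filter_upwards with t
        rw [MeasureTheory.integral_const_mul]
        congr 1
        rw [← intervalIntegral.integral_of_le hab (f := fun z => y (z + α * t)),
          intervalIntegral.integral_comp_add_right (fun u => y u) (α * t), hDinterval t]
      · apply Integrable.mono' ((integrableOn_const (μ := volume) (s := Ioc a b) (C := M) measure_Ioc_lt_top.ne).mul_prod
          hΦ'int.norm)
        · apply Continuous.aestronglyMeasurable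
          exact (hΦ'c.comp continuous_snd).mul (hyC.comp (continuous_fst.add
            (continuous_const.mul continuous_snd)))
        · filter_upwards with p
          show ‖deriv Φ p.2 * y (p.1 + α * p.2)‖ ≤ M * ‖deriv Φ p.2‖
          rw [Real.norm_eq_abs, Real.norm_eq_abs, abs_mul, mul_comm M]
          exact mul_le_mul_of_nonneg_left (hM _) (abs_nonneg _)
    have hD0 : D 0 = ∫ z in a..b, y z := by
      rw [hDinterval 0]
      norm_num
    have hii1 : IntervalIntegrable (fun z => -(Φ 0 / α) * y z) volume a b :=
      (continuous_const.mul hyC).intervalIntegrable a b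
    have hii2 : IntervalIntegrable
        (fun z => (1/α) * ∫ t in Ioi (0:ℝ), deriv Φ t * y (z + α * t)) volume a b :=
      (continuous_const.mul hIcont).intervalIntegrable a b
    calc ∫ z in a..b, g z
        = ∫ z in a..b, ((fun z => -(Φ 0 / α) * y z) z -
            (fun z => (1/α) * ∫ t in Ioi (0:ℝ), deriv Φ t * y (z + α * t)) z) := by
          apply intervalIntegral.integral_congr
          intro z _
          simp only [hgdef]
      _ = (∫ z in a..b, -(Φ 0 / α) * y z) -
            ∫ z in a..b, (1/α) * ∫ t in Ioi (0:ℝ), deriv Φ t * y (z + α * t) :=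
          intervalIntegral.integral_sub hii1 hii2
      _ = -(Φ 0 / α) * (∫ z in a..b, y z) -
            (1/α) * ∫ t in Ioi (0:ℝ), deriv Φ t * D t := by
          rw [intervalIntegral.integral_const_mul, intervalIntegral.integral_const_mul, hfub]
      _ = w b - w a := by
          rw [hsplit, hD0]
          field_simp
          ring
  -- pointwise identity
  have hptid : ∀ z, w z - y z = (α / Φ 0) * g z +
      (1/Φ 0) * ∫ t in Ioi (0:ℝ), (Φ 0 * Φ t + deriv Φ t) * y (z + α * t) := by
    intro z
    have hsplit2 : ∫ t in Ioi (0:ℝ), (Φ 0 * Φ t + deriv Φ t) * y (z + α * t)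
        = Φ 0 * (∫ t in Ioi (0:ℝ), Φ t * y (z + α * t)) +
          ∫ t in Ioi (0:ℝ), deriv Φ t * y (z + α * t) := by
      have e : (fun t => (Φ 0 * Φ t + deriv Φ t) * y (z + α * t))
          = fun t => Φ 0 * (Φ t * y (z + α * t)) + deriv Φ t * y (z + α * t) :=
        funext fun t => by ring
      rw [e, MeasureTheory.integral_add ((hyInt z).const_mul (Φ 0)) (hy'Int z),
        MeasureTheory.integral_const_mul]
    rw [hsplit2, ← hw' z]
    simp only [hgdef]
    field_simp
    ring
  have hKint : IntegrableOn (fun t => |Φ 0 * Φ t + deriv Φ t|) (Ioi 0) :=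
    ((hΦint.const_mul (Φ 0)).add hΦ'int).abs
  have hK0 : 0 ≤ K := by
    rw [hKdef]
    exact MeasureTheory.integral_nonneg fun t => abs_nonneg _
  -- pointwise bound
  have hpt : ∀ z, |w z - y z| ≤ (α / Φ 0) * |g z| + (M / Φ 0) * K := by
    intro z
    rw [hptid z]
    refine (abs_add_le _ _).trans ?_
    have h1 : |(α / Φ 0) * g z| = (α / Φ 0) * |g z| := by
      rw [abs_mul, abs_of_nonneg (div_nonneg hα.le hΦ0.le)]
    have h2 : |(1/Φ 0) * ∫ t in Ioi (0:ℝ), (Φ 0 * Φ t + deriv Φ t) * y (z + α * t)|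
        ≤ (M / Φ 0) * K := by
      rw [abs_mul, abs_of_nonneg (by positivity : (0:ℝ) ≤ 1 / Φ 0)]
      have h3 : ‖∫ t in Ioi (0:ℝ), (Φ 0 * Φ t + deriv Φ t) * y (z + α * t)‖
          ≤ ∫ t in Ioi (0:ℝ), |Φ 0 * Φ t + deriv Φ t| * M := by
        apply MeasureTheory.norm_integral_le_of_norm_le (hKint.mul_const M)
        filter_upwards with t
        rw [Real.norm_eq_abs, abs_mul]
        exact mul_le_mul_of_nonneg_left (hM _) (abs_nonneg _)
      rw [Real.norm_eq_abs] at h3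
      rw [MeasureTheory.integral_mul_const, ← hKdef] at h3
      calc (1/Φ 0) * |∫ t in Ioi (0:ℝ), (Φ 0 * Φ t + deriv Φ t) * y (z + α * t)|
          ≤ (1/Φ 0) * (K * M) := mul_le_mul_of_nonneg_left h3 (by positivity)
        _ = (M / Φ 0) * K := by ring
    rw [h1]
    exact add_le_add le_rfl h2
  -- variation bound on the integral of |g|
  have hvar : (∫ z in (-R:ℝ)..R, |g z|) ≤ (eVariationOn w Set.univ).toReal := by
    set V := (eVariationOn w Set.univ).toReal with hVdef
    refine le_of_forall_pos_le_add fun ε hε => ?_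
    set ε' := ε / (1 + 4*R) with hε'def
    have hε' : 0 < ε' := div_pos hε (by linarith)
    obtain ⟨δ, hδ, hδ'⟩ : ∃ δ > 0, ∀ u ∈ Icc (-R) R, ∀ v ∈ Icc (-R) R,
        dist u v < δ → dist (g u) (g v) < ε' := by
      have huc := (isCompact_Icc (a := -R) (b := R)).uniformContinuousOn_of_continuous
        hgc.continuousOn
      rw [Metric.uniformContinuousOn_iff] at huc
      obtain ⟨δ, hδ, hδ'⟩ := huc ε' hε'
      exact ⟨δ, hδ, fun u hu v hv hd => hδ' u hu v hv hd⟩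
    obtain ⟨n, hn⟩ := exists_nat_gt (2*R/δ)
    have hn0 : 0 < (n:ℝ) := lt_trans (div_pos (by linarith) hδ) hn
    have hnne : (n:ℝ) ≠ 0 := ne_of_gt hn0
    set h : ℝ := 2*R / n with hhdef
    have hh0 : 0 < h := div_pos (by linarith) hn0
    have hhδ : h < δ := by
      rw [hhdef, div_lt_iff₀ hn0]
      rw [div_lt_iff₀ hδ] at hn
      linarith [hn]
    set x : ℕ → ℝ := fun i => -R + h * i with hxdef
    have hx0 : x 0 = -R := by simp [hxdef]
    have hxn : x n = R := by
      show -R + h * (n:ℝ) = R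
      rw [hhdef]
      field_simp
      ring
    have hxmono : Monotone x := by
      intro i j hij
      simp only [hxdef]
      have : (i:ℝ) ≤ (j:ℝ) := Nat.cast_le.2 hij
      nlinarith
    have hxsucc : ∀ i : ℕ, x (i+1) - x i = h := by
      intro i
      simp only [hxdef]
      push_cast
      ring
    have hxmem : ∀ i : ℕ, i ≤ n → x i ∈ Icc (-R) R := by
      intro i hi
      constructor
      · rw [← hx0]; exact hxmono (Nat.zero_le i)
      · rw [← hxn]; exact hxmono hi
    have hsum : ∑ i ∈ Finset.range n, |w (x (i+1)) - w (x i)| ≤ V := by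
      have h1 := eVariationOn.sum_le (f := w) (n := n) hxmono (fun i => Set.mem_univ (x i))
      have h2 : ∑ i ∈ Finset.range n, |w (x (i+1)) - w (x i)|
          = (∑ i ∈ Finset.range n, edist (w (x (i+1))) (w (x i))).toReal := by
        rw [ENNReal.toReal_sum (fun i _ => edist_ne_top _ _)]
        apply Finset.sum_congr rfl
        intro i _
        rw [edist_dist, ENNReal.toReal_ofReal dist_nonneg, Real.dist_eq]
      rw [h2, hVdef]
      exact ENNReal.toReal_mono hwBV h1
    have hper : ∀ i, i < n →
        (∫ z in (x i)..(x (i+1)), |g z|) ≤ |w (x (i+1)) - w (x i)| + 2 * h * ε' := by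
      intro i hi
      have hxi := hxmem i (le_of_lt hi)
      have hxi1 := hxmem (i+1) hi
      have hle : x i ≤ x (i+1) := hxmono (Nat.le_succ i)
      have hmemIcc : ∀ z ∈ Icc (x i) (x (i+1)), z ∈ Icc (-R) R :=
        fun z hz => ⟨le_trans hxi.1 hz.1, le_trans hz.2 hxi1.2⟩
      have hosc : ∀ z ∈ Icc (x i) (x (i+1)), |g z - g (x i)| ≤ ε' := by
        intro z hz
        have hd : dist z (x i) < δ := by
          rw [Real.dist_eq, abs_of_nonneg (sub_nonneg.2 hz.1)]
          have : z - x i ≤ h := by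
            have := hxsucc i
            linarith [hz.2]
          linarith
        have := hδ' z (hmemIcc z hz) (x i) hxi hd
        rw [Real.dist_eq] at this
        exact le_of_lt this
      have hA : (∫ z in (x i)..(x (i+1)), |g z|)
          ≤ (x (i+1) - x i) * |g (x i)| + (x (i+1) - x i) * ε' := by
        have hmono : ∀ z ∈ Icc (x i) (x (i+1)), |g z| ≤ |g (x i)| + ε' := by
          intro z hz
          calc |g z| = |g (x i) + (g z - g (x i))| := by congr 1; ring
            _ ≤ |g (x i)| + |g z - g (x i)| := abs_add_le _ _
            _ ≤ |g (x i)| + ε' := add_le_add le_rfl (hosc z hz)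
        calc (∫ z in (x i)..(x (i+1)), |g z|)
            ≤ ∫ _z in (x i)..(x (i+1)), (|g (x i)| + ε') := by
              apply intervalIntegral.integral_mono_on hle
                (hgc.abs.intervalIntegrable _ _) intervalIntegrable_const hmono
          _ = (x (i+1) - x i) * (|g (x i)| + ε') := by
              rw [intervalIntegral.integral_const, smul_eq_mul]
          _ = (x (i+1) - x i) * |g (x i)| + (x (i+1) - x i) * ε' := by ring
      have hB : (x (i+1) - x i) * |g (x i)|
          ≤ |∫ z in (x i)..(x (i+1)), g z| + (x (i+1) - x i) * ε' := by
        have h1 : ‖∫ z in (x i)..(x (i+1)), (g (x i) - g z)‖ ≤ ε' * |x (i+1) - x i| := by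
          apply intervalIntegral.norm_integral_le_of_norm_le_const
          intro z hz
          rw [Set.uIoc_of_le hle] at hz
          have hz' : z ∈ Icc (x i) (x (i+1)) := ⟨le_of_lt hz.1, hz.2⟩
          rw [Real.norm_eq_abs, abs_sub_comm]
          exact hosc z hz'
        have h2 : ∫ z in (x i)..(x (i+1)), (g (x i) - g z)
            = (x (i+1) - x i) * g (x i) - ∫ z in (x i)..(x (i+1)), g z := by
          rw [intervalIntegral.integral_sub intervalIntegrable_const
            (hgc.intervalIntegrable _ _), intervalIntegral.integral_const, smul_eq_mul]
        rw [Real.norm_eq_abs, h2, abs_of_nonneg (sub_nonneg.2 hle)] at h1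
        have h5 : |(x (i+1) - x i) * g (x i)|
            ≤ |(x (i+1) - x i) * g (x i) - ∫ z in (x i)..(x (i+1)), g z|
              + |∫ z in (x i)..(x (i+1)), g z| := by
          have h7 := abs_add_le ((x (i+1) - x i) * g (x i) - ∫ z in (x i)..(x (i+1)), g z)
            (∫ z in (x i)..(x (i+1)), g z)
          simpa using h7
        have h6 : |(x (i+1) - x i) * g (x i)| = (x (i+1) - x i) * |g (x i)| := by
          rw [abs_mul, abs_of_nonneg (sub_nonneg.2 hle)]
        rw [h6] at h5
        linarith [h1, h5]
      have hwdiff : ∫ z in (x i)..(x (i+1)), g z = w (x (i+1)) - w (x i) := hkey _ _ hle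
      rw [hwdiff] at hB
      have hxs := hxsucc i
      calc (∫ z in (x i)..(x (i+1)), |g z|)
          ≤ (x (i+1) - x i) * |g (x i)| + (x (i+1) - x i) * ε' := hA
        _ ≤ |w (x (i+1)) - w (x i)| + (x (i+1) - x i) * ε' + (x (i+1) - x i) * ε' := by
            linarith [hB]
        _ = |w (x (i+1)) - w (x i)| + 2 * h * ε' := by rw [hxs]; ring
    have hsplitint : (∫ z in (-R:ℝ)..R, |g z|)
        = ∑ i ∈ Finset.range n, ∫ z in (x i)..(x (i+1)), |g z| := by
      rw [← hx0, ← hxn]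
      exact (intervalIntegral.sum_integral_adjacent_intervals
        fun i _ => (hgc.abs.intervalIntegrable (μ := volume) _ _)).symm
    rw [hsplitint]
    calc ∑ i ∈ Finset.range n, ∫ z in (x i)..(x (i+1)), |g z|
        ≤ ∑ i ∈ Finset.range n, (|w (x (i+1)) - w (x i)| + 2 * h * ε') :=
          Finset.sum_le_sum fun i hi => hper i (Finset.mem_range.1 hi)
      _ = (∑ i ∈ Finset.range n, |w (x (i+1)) - w (x i)|) + n * (2 * h * ε') := by
          rw [Finset.sum_add_distrib, Finset.sum_const, Finset.card_range, nsmul_eq_mul]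
      _ ≤ V + ε := by
          have hnh : (n:ℝ) * h = 2 * R := by
            rw [hhdef]
            field_simp
          have : (n:ℝ) * (2 * h * ε') = 4 * R * ε' := by
            rw [show (n:ℝ) * (2 * h * ε') = 2 * ((n:ℝ) * h) * ε' by ring, hnh]
            ring
          rw [this]
          have hmul : ε' * (1 + 4 * R) = ε := by
            rw [hε'def]; field_simp
          have h4R : 4 * R * ε' ≤ ε := by nlinarith [hε'.le, hmul]
          linarith [hsum]
  -- final assembly
  have hint2R : IntegrableOn (fun z => (α / Φ 0) * |g z| + (M / Φ 0) * K) (Icc (-R) R) :=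
    (((continuous_const.mul hgc.abs).add continuous_const)).integrableOn_Icc
  have hint1R : IntegrableOn (fun z => |w z - y z|) (Icc (-R) R) :=
    ((hwc.sub hyC).abs).integrableOn_Icc
  have hgInt : IntegrableOn (fun z => |g z|) (Icc (-R) R) := hgc.abs.integrableOn_Icc
  calc ∫ z in Icc (-R) R, |w z - y z|
      ≤ ∫ z in Icc (-R) R, ((α / Φ 0) * |g z| + (M / Φ 0) * K) :=
        MeasureTheory.setIntegral_mono_on hint1R hint2R measurableSet_Icc fun z _ => hpt z
    _ = (α / Φ 0) * (∫ z in Icc (-R) R, |g z|) + (2*R) * ((M / Φ 0) * K) := by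
        rw [MeasureTheory.integral_add (hgInt.const_mul _)
          (integrableOn_const (μ := volume) (s := Icc (-R) R) (C := (M / Φ 0) * K)
            measure_Icc_lt_top.ne),
          MeasureTheory.integral_const_mul, MeasureTheory.setIntegral_const, smul_eq_mul,
          measureReal_def, Real.volume_Icc]
        congr 2
        rw [ENNReal.toReal_ofReal (by linarith)]
        ring
    _ ≤ (α / Φ 0) * (eVariationOn w Set.univ).toReal + (2 * R * M / Φ 0) * K := by
        have heq : ∫ z in Icc (-R) R, |g z| = ∫ z in (-R:ℝ)..R, |g z| := by
          rw [intervalIntegral.integral_of_le (by linarith), integral_Icc_eq_integral_Ioc]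
        rw [heq]
        have h1 : (α / Φ 0) * (∫ z in (-R:ℝ)..R, |g z|)
            ≤ (α / Φ 0) * (eVariationOn w Set.univ).toReal :=
          mul_le_mul_of_nonneg_left hvar (by positivity)
        have h2 : (2*R) * ((M / Φ 0) * K) = (2 * R * M / Φ 0) * K := by ring
        linarith [h1, h2.le]



lemma ode_iff (Φ : ℝ → ℝ) (hΦdiff : ContDiff ℝ 1 Φ) (hΦ0 : 0 < Φ 0) :
    ((∀ ζ : ℝ, 0 ≤ ζ → Φ 0 * Φ ζ + deriv Φ ζ = 0) ↔
      (∀ ζ : ℝ, 0 ≤ ζ → Φ ζ = Φ 0 * Real.exp (-(Φ 0) * ζ))) := by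
  have hdiff : Differentiable ℝ Φ := hΦdiff.differentiable one_ne_zero
  constructor
  · intro h ζ hζ
    set f : ℝ → ℝ := fun t => Φ t * Real.exp (Φ 0 * t) with hf
    have hfd : ∀ t : ℝ, 0 ≤ t → HasDerivAt f 0 t := by
      intro t ht
      have h1 : HasDerivAt Φ (deriv Φ t) t := (hdiff t).hasDerivAt
      have h2 : HasDerivAt (fun s : ℝ => Real.exp (Φ 0 * s)) (Φ 0 * Real.exp (Φ 0 * t)) t := by
        have := (((hasDerivAt_id t).const_mul (Φ 0))).exp
        simpa [mul_comm] using this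
      have := h1.mul h2
      have h3 := h t ht
      have h4 : deriv Φ t = -(Φ 0 * Φ t) := by linarith
      have e : deriv Φ t * Real.exp (Φ 0 * t) + Φ t * (Φ 0 * Real.exp (Φ 0 * t)) = 0 := by
        rw [h4]; ring
      rw [e] at this; exact this
    have key : ∀ x ∈ Icc (0:ℝ) ζ, f x = f 0 := by
      apply constant_of_has_deriv_right_zero
      · exact ((hdiff.continuous.mul (by continuity)).continuousOn)
      · intro x hx
        exact (hfd x hx.1).hasDerivWithinAt
    have h0 : f ζ = f 0 := key ζ ⟨hζ, le_rfl⟩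
    have : Φ ζ * Real.exp (Φ 0 * ζ) = Φ 0 := by simpa [hf] using h0
    have hexp : Real.exp (Φ 0 * ζ) ≠ 0 := Real.exp_ne_zero _
    rw [neg_mul, Real.exp_neg]
    field_simp
    linarith [this]
  · intro h ζ hζ
    rcases eq_or_lt_of_le hζ with h0 | hpos
    · -- ζ = 0 case: use continuity of deriv Φ
      subst h0
      have hc : Continuous (deriv Φ) := hΦdiff.continuous_deriv le_rfl
      have hlim1 : Filter.Tendsto (deriv Φ) (nhdsWithin 0 (Ioi 0)) (nhds (deriv Φ 0)) :=
        (hc.continuousAt).continuousWithinAt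
      have heq : ∀ t ∈ Ioi (0:ℝ), deriv Φ t = -(Φ 0 * Φ 0) * Real.exp (-(Φ 0) * t) := by
        intro t ht
        have hev : Φ =ᶠ[nhds t] fun s => Φ 0 * Real.exp (-(Φ 0) * s) := by
          filter_upwards [isOpen_Ioi.mem_nhds ht] with s hs
          exact h s (le_of_lt hs)
        rw [hev.deriv_eq]
        have : HasDerivAt (fun s : ℝ => Φ 0 * Real.exp (-(Φ 0) * s))
            (Φ 0 * (-(Φ 0) * Real.exp (-(Φ 0) * t))) t := by
          have : HasDerivAt (fun s : ℝ => Real.exp (-(Φ 0) * s)) (-(Φ 0) * Real.exp (-(Φ 0) * t)) t := by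
            have := (((hasDerivAt_id t).const_mul (-(Φ 0)))).exp
            simpa [mul_comm] using this
          simpa using this.const_mul (Φ 0)
        rw [this.deriv]; ring
      have hlim2 : Filter.Tendsto (deriv Φ) (nhdsWithin 0 (Ioi 0)) (nhds (-(Φ 0 * Φ 0))) := by
        have hcont : Filter.Tendsto (fun t : ℝ => -(Φ 0 * Φ 0) * Real.exp (-(Φ 0) * t))
            (nhdsWithin 0 (Ioi 0)) (nhds (-(Φ 0 * Φ 0))) := by
          have hc2 : Continuous fun t : ℝ => -(Φ 0 * Φ 0) * Real.exp (-(Φ 0) * t) :=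
            continuous_const.mul (Real.continuous_exp.comp (continuous_const.mul continuous_id))
          have h5 := (hc2.continuousAt (x := 0)).continuousWithinAt (s := Ioi 0)
          have h6 : Filter.Tendsto (fun t : ℝ => -(Φ 0 * Φ 0) * Real.exp (-(Φ 0) * t))
              (nhdsWithin 0 (Ioi 0)) (nhds (-(Φ 0 * Φ 0) * Real.exp (-(Φ 0) * 0))) := h5
          simpa using h6
        apply hcont.congr'
        filter_upwards [self_mem_nhdsWithin] with t ht
        exact (heq t ht).symm
      have hne : (nhdsWithin (0:ℝ) (Ioi 0)).NeBot := nhdsGT_neBot 0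
      have := tendsto_nhds_unique hlim1 hlim2
      rw [this]; ring
    · have hev : Φ =ᶠ[nhds ζ] fun s => Φ 0 * Real.exp (-(Φ 0) * s) := by
        filter_upwards [isOpen_Ioi.mem_nhds hpos] with s hs
        exact h s (le_of_lt hs)
      rw [hev.deriv_eq]
      have hd : HasDerivAt (fun s : ℝ => Φ 0 * Real.exp (-(Φ 0) * s))
          (Φ 0 * (-(Φ 0) * Real.exp (-(Φ 0) * ζ))) ζ := by
        have : HasDerivAt (fun s : ℝ => Real.exp (-(Φ 0) * s)) (-(Φ 0) * Real.exp (-(Φ 0) * ζ)) ζ := by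
          have := (((hasDerivAt_id ζ).const_mul (-(Φ 0)))).exp
          simpa [mul_comm] using this
        simpa using this.const_mul (Φ 0)
      rw [hd.deriv, h ζ hζ]; ring

open MeasureTheory

/-- for a `C¹`, non-increasing, unit-mass kernel `Φ` with
`Φ(0) > 0`, the difference between a bounded continuous function `y` and its
average `w(z) = ∫₀^∞ Φ_α(ζ) y(z+ζ) dζ` satisfies, for every `R > 0`,
`∫_{−R}^{R} |w − y| ≤ (α/Φ(0)) TV(w) + (2R‖y‖_∞/Φ(0)) ∫₀^∞ |Φ(0)Φ(ζ) + Φ'(ζ)| dζ`;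
moreover the last integrand vanishes identically on `[0,∞)` if and only if
`Φ` is the (`Φ(0)`-normalized) exponential kernel. -/
theorem stmt_18
    (Φ : ℝ → ℝ) (α : ℝ) (hα : 0 < α)
    (hΦdiff : ContDiff ℝ 1 Φ)
    (hΦmono : ∀ x y : ℝ, 0 ≤ x → x ≤ y → Φ y ≤ Φ x)
    (hΦnonneg : ∀ z : ℝ, 0 ≤ z → 0 ≤ Φ z)
    (hΦmass : ∫ ζ in Set.Ioi (0:ℝ), Φ ζ = 1)
    (hΦ0 : 0 < Φ 0)
    (y : ℝ → ℝ) (hyB : ∃ M, ∀ z, |y z| ≤ M) (hyC : Continuous y)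
    (w : ℝ → ℝ)
    (hw : ∀ z : ℝ, w z = ∫ ζ in Set.Ioi (0:ℝ), (1/α) * Φ (ζ/α) * y (z + ζ))
    (hwBV : BoundedVariationOn w Set.univ) :
    (∀ R : ℝ, 0 < R →
      ∫ z in Set.Icc (-R) R, |w z - y z| ≤
        (α / Φ 0) * (eVariationOn w Set.univ).toReal +
          (2 * R * (⨆ z : ℝ, |y z|) / Φ 0) *
            ∫ ζ in Set.Ioi (0:ℝ), |Φ 0 * Φ ζ + deriv Φ ζ|) ∧
    ((∀ ζ : ℝ, 0 ≤ ζ → Φ 0 * Φ ζ + deriv Φ ζ = 0) ↔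
      (∀ ζ : ℝ, 0 ≤ ζ → Φ ζ = Φ 0 * Real.exp (-(Φ 0) * ζ))) := by
  constructor
  · intro R hR
    exact main_ineq Φ α hα hΦdiff hΦmono hΦnonneg hΦmass hΦ0 y hyB hyC w hw hwBV R hR
  · exact ode_iff Φ hΦdiff hΦ0
end
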